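/- Extensionality for ∀-types (may): let u, v ∈ Val(∀α.σ) be closed values such that for all closed types τ, u τ ≅↓ctx v τ : σ[τ/α] (where w τ abbreviates let f = w in f τ). Then u ≅↓ctx v : ∀α.σ. -/

import Mathlib

set_option maxHeartbeats 1000000

namespace CountChoice

/-! ## Syntax: types and terms (de Bruijn indices) -/

/-- Types: type variables, unit, products, functions, recursive sum types
`μα.(τ₁+…+τₙ)` (the `μ` binds one type variable, common to all summands),
and universal types `∀α.τ`. -/
inductive Ty : Type where
  | var : ℕ → Ty
  | unit : Ty
  | prod : Ty → Ty → Ty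
  | arrow : Ty → Ty → Ty
  | mu : (m : ℕ) → (Fin m → Ty) → Ty
  | all : Ty → Ty

/-- Lifting a renaming under a binder. -/
def liftR (f : ℕ → ℕ) : ℕ → ℕ
  | 0 => 0
  | i + 1 => f i + 1

def Ty.rename (f : ℕ → ℕ) : Ty → Ty
  | .var i => .var (f i)
  | .unit => .unit
  | .prod a b => .prod (a.rename f) (b.rename f)
  | .arrow a b => .arrow (a.rename f) (b.rename f)
  | .mu m ts => .mu m (fun j => (ts j).rename (liftR f))
  | .all a => .all (a.rename (liftR f))

/-- Lifting a type substitution under a type binder. -/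
def liftS (σ : ℕ → Ty) : ℕ → Ty
  | 0 => .var 0
  | i + 1 => (σ i).rename Nat.succ

def Ty.subst (σ : ℕ → Ty) : Ty → Ty
  | .var i => σ i
  | .unit => .unit
  | .prod a b => .prod (a.subst σ) (b.subst σ)
  | .arrow a b => .arrow (a.subst σ) (b.subst σ)
  | .mu m ts => .mu m (fun j => (ts j).subst (liftS σ))
  | .all a => .all (a.subst (liftS σ))

/-- Extending a type substitution (cons). -/
def consTy (τ : Ty) (σ : ℕ → Ty) : ℕ → Ty
  | 0 => τ
  | i + 1 => σ i

/-- `Ty.subst1 σ τ` is `τ[σ/α]`, substitution of `σ` for the innermost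
type variable of `τ`. -/
def Ty.subst1 (σ : Ty) (τ : Ty) : Ty := τ.subst (consTy σ Ty.var)

/-- `Ty.Wf Δ τ`: all free type variables of `τ` are among the first `Δ`. -/
def Ty.Wf : ℕ → Ty → Prop
  | Δ, .var i => i < Δ
  | _, .unit => True
  | Δ, .prod a b => a.Wf Δ ∧ b.Wf Δ
  | Δ, .arrow a b => a.Wf Δ ∧ b.Wf Δ
  | Δ, .mu _ ts => ∀ j, (ts j).Wf (Δ + 1)
  | Δ, .all a => a.Wf (Δ + 1)

/-- Terms.  `case v m es` is `case v of (in₁ x₁.e₁ | … | inₘ xₘ.eₘ)`;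
`choice` is the countable choice `?`; `proj false`/`proj true` are the two
projections; `tapp v τ` is type application `v τ`; `tlam` is `Λα.e`. -/
inductive Tm : Type where
  | var : ℕ → Tm
  | unit : Tm
  | pair : Tm → Tm → Tm
  | lam : Tm → Tm
  | inj : ℕ → Tm → Tm
  | tlam : Tm → Tm
  | choice : Tm
  | proj : Bool → Tm → Tm
  | app : Tm → Tm → Tm
  | case : Tm → (m : ℕ) → (Fin m → Tm) → Tm
  | tapp : Tm → Ty → Tm

/-- Values. -/
inductive IsVal : Tm → Prop where
  | var : ∀ {x}, IsVal (.var x)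
  | unit : IsVal .unit
  | pair : ∀ {v₁ v₂}, IsVal v₁ → IsVal v₂ → IsVal (.pair v₁ v₂)
  | lam : ∀ {e}, IsVal (.lam e)
  | inj : ∀ {j v}, IsVal v → IsVal (.inj j v)
  | tlam : ∀ {e}, IsVal (.tlam e)

/-- Renaming of term variables. -/
def Tm.rename (f : ℕ → ℕ) : Tm → Tm
  | .var i => .var (f i)
  | .unit => .unit
  | .pair a b => .pair (a.rename f) (b.rename f)
  | .lam e => .lam (e.rename (liftR f))
  | .inj j v => .inj j (v.rename f)
  | .tlam e => .tlam (e.rename f)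
  | .choice => .choice
  | .proj b v => .proj b (v.rename f)
  | .app a b => .app (a.rename f) (b.rename f)
  | .case v m es => .case (v.rename f) m (fun j => (es j).rename (liftR f))
  | .tapp v τ => .tapp (v.rename f) τ

/-- Renaming of type variables inside a term. -/
def Tm.tyRename (f : ℕ → ℕ) : Tm → Tm
  | .var i => .var i
  | .unit => .unit
  | .pair a b => .pair (a.tyRename f) (b.tyRename f)
  | .lam e => .lam (e.tyRename f)
  | .inj j v => .inj j (v.tyRename f)
  | .tlam e => .tlam (e.tyRename (liftR f))
  | .choice => .choice
  | .proj b v => .proj b (v.tyRename f)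
  | .app a b => .app (a.tyRename f) (b.tyRename f)
  | .case v m es => .case (v.tyRename f) m (fun j => (es j).tyRename f)
  | .tapp v τ => .tapp (v.tyRename f) (τ.rename f)

/-- Lifting a term substitution under a term binder. -/
def liftT (σ : ℕ → Tm) : ℕ → Tm
  | 0 => .var 0
  | i + 1 => (σ i).rename Nat.succ

/-- Substitution of terms for term variables. -/
def Tm.subst (σ : ℕ → Tm) : Tm → Tm
  | .var i => σ i
  | .unit => .unit
  | .pair a b => .pair (a.subst σ) (b.subst σ)
  | .lam e => .lam (e.subst (liftT σ))
  | .inj j v => .inj j (v.subst σ)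
  | .tlam e => .tlam (e.subst (fun i => (σ i).tyRename Nat.succ))
  | .choice => .choice
  | .proj b v => .proj b (v.subst σ)
  | .app a b => .app (a.subst σ) (b.subst σ)
  | .case v m es => .case (v.subst σ) m (fun j => (es j).subst (liftT σ))
  | .tapp v τ => .tapp (v.subst σ) τ

/-- Substitution of types for type variables inside a term. -/
def Tm.tySubst (σ : ℕ → Ty) : Tm → Tm
  | .var i => .var i
  | .unit => .unit
  | .pair a b => .pair (a.tySubst σ) (b.tySubst σ)
  | .lam e => .lam (e.tySubst σ)
  | .inj j v => .inj j (v.tySubst σ)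
  | .tlam e => .tlam (e.tySubst (liftS σ))
  | .choice => .choice
  | .proj b v => .proj b (v.tySubst σ)
  | .app a b => .app (a.tySubst σ) (b.tySubst σ)
  | .case v m es => .case (v.tySubst σ) m (fun j => (es j).tySubst σ)
  | .tapp v τ => .tapp (v.tySubst σ) (τ.subst σ)

/-- Extending a term substitution (cons). -/
def consTm (v : Tm) (σ : ℕ → Tm) : ℕ → Tm
  | 0 => v
  | i + 1 => σ i

/-- `subst1 v e` is `e[v/x]` for the innermost term variable. -/
def subst1 (v : Tm) (e : Tm) : Tm := e.subst (consTm v Tm.var)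

/-- `tySubst1 σ e` is `e[σ/α]` for the innermost type variable. -/
def tySubst1 (σ : Ty) (e : Tm) : Tm := e.tySubst (consTy σ Ty.var)

/-- A term is closed if it is invariant under all term- and type-variable
substitutions. -/
def Tm.Closed (e : Tm) : Prop :=
  (∀ σ : ℕ → Tm, e.subst σ = e) ∧ (∀ σ : ℕ → Ty, e.tySubst σ = e)

/-! ## Numerals and the type of natural numbers -/

/-- `nat = μα.(1+α)`. -/
def natTy : Ty := .mu 2 ![.unit, .var 0]

/-- Numerals `n̲`. -/
def numeral : ℕ → Tm
  | 0 => .inj 0 .unit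
  | n + 1 => .inj 1 (numeral n)

/-! ## Operational semantics -/

/-- Labels classifying reduction steps.  `unfold` labels the unfold-fold
(case) reductions, `choice` labels the `? ↦ n̲` reductions. -/
inductive Lbl : Type where
  | beta | projred | tbeta | unfold | choice

/-- Labeled one-step reduction. -/
inductive Step : Tm → Lbl → Tm → Prop where
  | projFst : ∀ {v₁ v₂}, IsVal v₁ → IsVal v₂ →
      Step (.proj false (.pair v₁ v₂)) .projred v₁
  | projSnd : ∀ {v₁ v₂}, IsVal v₁ → IsVal v₂ →
      Step (.proj true (.pair v₁ v₂)) .projred v₂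
  | beta : ∀ {e v}, IsVal v → Step (.app (.lam e) v) .beta (subst1 v e)
  | tbeta : ∀ {e τ}, Step (.tapp (.tlam e) τ) .tbeta (tySubst1 τ e)
  | caseInj : ∀ {m : ℕ} {es : Fin m → Tm} {j : ℕ} {v} (h : j < m), IsVal v →
      Step (.case (.inj j v) m es) .unfold (subst1 v (es ⟨j, h⟩))
  | choice : ∀ n : ℕ, Step .choice .choice (numeral n)
  | appArg : ∀ {v e l e'}, IsVal v → Step e l e' → Step (.app v e) l (.app v e')

/-- One-step reduction `e ↦ e'`. -/
def Red (e e' : Tm) : Prop := ∃ l, Step e l e'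

/-- `StepsU e n e'`: `e ↦* e'` with exactly `n` unfold-fold reductions in
the sequence. -/
inductive StepsU : Tm → ℕ → Tm → Prop where
  | refl : ∀ {e}, StepsU e 0 e
  | unfold : ∀ {e e₁ n e₂}, Step e .unfold e₁ → StepsU e₁ n e₂ → StepsU e (n + 1) e₂
  | other : ∀ {e l e₁ n e₂}, l ≠ .unfold → Step e l e₁ → StepsU e₁ n e₂ → StepsU e n e₂

/-- May-convergence `e↓`. -/
def MayConv (e : Tm) : Prop := ∃ n v, StepsU e n v ∧ IsVal v

/-- `e↓ₙ`: `e` reduces to a value with at most `n` unfold-fold reductions. -/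
def MayConvN (e : Tm) (n : ℕ) : Prop := ∃ m ≤ n, ∃ v, StepsU e m v ∧ IsVal v

/-- `e ⇝¹ e'`: `e ↦* e'` with exactly one unfold-fold reduction. -/
def UnfoldOne (e e' : Tm) : Prop := StepsU e 1 e'

/-- `e ⇝ᵖ e'`: `e ↦* e'` with no choice reductions. -/
inductive PSteps : Tm → Tm → Prop where
  | refl : ∀ {e}, PSteps e e
  | step : ∀ {e l e₁ e₂}, l ≠ .choice → Step e l e₁ → PSteps e₁ e₂ → PSteps e e₂

/-- `e ⇝ᵖ⁰ e'`: `e ↦* e'` with no choice reductions and no unfold-fold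
reductions. -/
inductive P0Steps : Tm → Tm → Prop where
  | refl : ∀ {e}, P0Steps e e
  | step : ∀ {e l e₁ e₂}, l ≠ .choice → l ≠ .unfold → Step e l e₁ →
      P0Steps e₁ e₂ → P0Steps e e₂

/-- Must-convergence `e⇓`: the least predicate closed under the rule
"if every one-step reduct of `e` must-converges then so does `e`". -/
inductive Must : Tm → Prop where
  | intro : ∀ {e}, (∀ e', Red e e' → Must e') → Must e

/-- The least uncountable ordinal `ω₁`. -/
noncomputable def omega1 : Ordinal.{0} := (Cardinal.aleph 1).ord

/-- The stratified predicate `e↯_β`, defined by ordinal induction: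
`e↯_β` iff every one-step reduct `e'` of `e` satisfies `e'↯_ν`
for some `ν < β`. -/
def Lightning (β : Ordinal.{0}) (e : Tm) : Prop :=
  ∀ e', Red e e' → ∃ ν : {ν : Ordinal.{0} // ν < β}, Lightning ν.1 e'
termination_by β
decreasing_by exact ν.2

/-- The stratified must-convergence predicate `e⇓_β`, defined by ordinal
induction: `e⇓_β` iff whenever `e ⇝¹ e'` there is `ν < β` with `e'⇓_ν`. -/
def MustStrat (β : Ordinal.{0}) (e : Tm) : Prop :=
  ∀ e', UnfoldOne e e' → ∃ ν : {ν : Ordinal.{0} // ν < β}, MustStrat ν.1 e'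
termination_by β
decreasing_by exact ν.2

/-! ## Typing -/

/-- `Δ ⊢ Γ`: all types in the context are well-formed in `Δ`. -/
def CtxWf (Δ : ℕ) (Γ : List Ty) : Prop := ∀ τ ∈ Γ, Ty.Wf Δ τ

/-- The typing judgement `Δ;Γ ⊢ e : τ` (`Δ` counts type variables, `Γ` is the
list of types of term variables, innermost first). -/
inductive HasTy : ℕ → List Ty → Tm → Ty → Prop where
  | var : ∀ {Δ Γ x τ}, CtxWf Δ Γ → Γ[x]? = some τ → HasTy Δ Γ (.var x) τ
  | unit : ∀ {Δ Γ}, CtxWf Δ Γ → HasTy Δ Γ .unit .unit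
  | pair : ∀ {Δ Γ v₁ v₂ τ₁ τ₂}, IsVal v₁ → IsVal v₂ →
      HasTy Δ Γ v₁ τ₁ → HasTy Δ Γ v₂ τ₂ → HasTy Δ Γ (.pair v₁ v₂) (.prod τ₁ τ₂)
  | lam : ∀ {Δ Γ e τ₁ τ₂}, Ty.Wf Δ τ₁ → HasTy Δ (τ₁ :: Γ) e τ₂ →
      HasTy Δ Γ (.lam e) (.arrow τ₁ τ₂)
  | inj : ∀ {Δ Γ v} {m : ℕ} {ts : Fin m → Ty} {j : ℕ} (h : j < m), IsVal v →
      Ty.Wf Δ (.mu m ts) →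
      HasTy Δ Γ v (Ty.subst1 (.mu m ts) (ts ⟨j, h⟩)) →
      HasTy Δ Γ (.inj j v) (.mu m ts)
  | tlam : ∀ {Δ Γ e τ}, HasTy (Δ + 1) (Γ.map (Ty.rename Nat.succ)) e τ →
      HasTy Δ Γ (.tlam e) (.all τ)
  | proj : ∀ {Δ Γ v τ₁ τ₂} (b : Bool), IsVal v → HasTy Δ Γ v (.prod τ₁ τ₂) →
      HasTy Δ Γ (.proj b v) (bif b then τ₂ else τ₁)
  | app : ∀ {Δ Γ v e τ₁ τ₂}, IsVal v → HasTy Δ Γ v (.arrow τ₁ τ₂) →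
      HasTy Δ Γ e τ₁ → HasTy Δ Γ (.app v e) τ₂
  | case : ∀ {Δ Γ v τ'} {m : ℕ} {ts : Fin m → Ty} {es : Fin m → Tm}, IsVal v →
      HasTy Δ Γ v (.mu m ts) →
      (∀ j : Fin m, HasTy Δ (Ty.subst1 (.mu m ts) (ts j) :: Γ) (es j) τ') →
      HasTy Δ Γ (.case v m es) τ'
  | tapp : ∀ {Δ Γ v τ σ}, IsVal v → HasTy Δ Γ v (.all τ) → Ty.Wf Δ σ →
      HasTy Δ Γ (.tapp v σ) (Ty.subst1 σ τ)
  | choice : ∀ {Δ Γ}, CtxWf Δ Γ → HasTy Δ Γ .choice natTy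

/-! ## Evaluation contexts -/

/-- Evaluation contexts `E ::= [] | v E` are represented as lists of the
applied values, outermost first. -/
def plug (E : List Tm) (e : Tm) : Tm := E.foldr .app e

/-- Typing of evaluation contexts, `⊢ E : τ ⊸ τ'`. -/
inductive ECtxTy : List Tm → Ty → Ty → Prop where
  | nil : ∀ {τ}, Ty.Wf 0 τ → ECtxTy [] τ τ
  | cons : ∀ {v E τ₁ τ τ₂}, IsVal v → HasTy 0 [] v (.arrow τ τ₂) →
      ECtxTy E τ₁ τ → ECtxTy (v :: E) τ₁ τ₂

/-! ## CIU preorders -/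

/-- A closing type substitution `δ ∈ Type^Δ`. -/
def TySubstOK (Δ : ℕ) (δ : ℕ → Ty) : Prop := ∀ i < Δ, Ty.Wf 0 (δ i)

/-- A type-respecting closing value substitution `γ ∈ Subst(Γ)`. -/
def SubstOK (Γ : List Ty) (γ : ℕ → Tm) : Prop :=
  ∀ i τ, Γ[i]? = some τ → IsVal (γ i) ∧ HasTy 0 [] (γ i) τ

/-- The may-CIU preorder `Δ;Γ ⊢ e ≾↓ciu e' : τ`. -/
def CiuMay (Δ : ℕ) (Γ : List Ty) (e e' : Tm) (τ : Ty) : Prop :=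
  HasTy Δ Γ e τ ∧ HasTy Δ Γ e' τ ∧
  ∀ δ, TySubstOK Δ δ → ∀ γ, SubstOK (Γ.map (Ty.subst δ)) γ →
  ∀ E τ', ECtxTy E (τ.subst δ) τ' →
  MayConv (plug E ((e.tySubst δ).subst γ)) → MayConv (plug E ((e'.tySubst δ).subst γ))

/-- The must-CIU preorder `Δ;Γ ⊢ e ≾⇓ciu e' : τ`. -/
def CiuMust (Δ : ℕ) (Γ : List Ty) (e e' : Tm) (τ : Ty) : Prop :=
  HasTy Δ Γ e τ ∧ HasTy Δ Γ e' τ ∧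
  ∀ δ, TySubstOK Δ δ → ∀ γ, SubstOK (Γ.map (Ty.subst δ)) γ →
  ∀ E τ', ECtxTy E (τ.subst δ) τ' →
  Must (plug E ((e.tySubst δ).subst γ)) → Must (plug E ((e'.tySubst δ).subst γ))

/-! ## Type-indexed relations, precongruences and contextual approximation -/

/-- A type-indexed relation. -/
def TIRel : Type := ℕ → List Ty → Tm → Tm → Ty → Prop

/-- A type-indexed relation relates only well-typed terms. -/
def WellTypedRel (R : TIRel) : Prop :=
  ∀ Δ Γ e e' τ, R Δ Γ e e' τ → HasTy Δ Γ e τ ∧ HasTy Δ Γ e' τ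

def ReflRel (R : TIRel) : Prop := ∀ Δ Γ e τ, HasTy Δ Γ e τ → R Δ Γ e e τ

def TransRel (R : TIRel) : Prop :=
  ∀ Δ Γ e₁ e₂ e₃ τ, R Δ Γ e₁ e₂ τ → R Δ Γ e₂ e₃ τ → R Δ Γ e₁ e₃ τ

/-- The compatibility rules (one for each term former). -/
structure Compatible (R : TIRel) : Prop where
  var : ∀ {Δ Γ x τ}, CtxWf Δ Γ → Γ[x]? = some τ → R Δ Γ (.var x) (.var x) τ
  unit : ∀ {Δ Γ}, CtxWf Δ Γ → R Δ Γ .unit .unit .unit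
  pair : ∀ {Δ Γ v₁ v₂ v₁' v₂' τ₁ τ₂}, IsVal v₁ → IsVal v₂ → IsVal v₁' → IsVal v₂' →
      R Δ Γ v₁ v₁' τ₁ → R Δ Γ v₂ v₂' τ₂ →
      R Δ Γ (.pair v₁ v₂) (.pair v₁' v₂') (.prod τ₁ τ₂)
  lam : ∀ {Δ Γ e e' τ₁ τ₂}, Ty.Wf Δ τ₁ → R Δ (τ₁ :: Γ) e e' τ₂ →
      R Δ Γ (.lam e) (.lam e') (.arrow τ₁ τ₂)
  inj : ∀ {Δ Γ v v'} {m : ℕ} {ts : Fin m → Ty} {j : ℕ} (h : j < m),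
      IsVal v → IsVal v' → Ty.Wf Δ (.mu m ts) →
      R Δ Γ v v' (Ty.subst1 (.mu m ts) (ts ⟨j, h⟩)) →
      R Δ Γ (.inj j v) (.inj j v') (.mu m ts)
  tlam : ∀ {Δ Γ e e' τ}, R (Δ + 1) (Γ.map (Ty.rename Nat.succ)) e e' τ →
      R Δ Γ (.tlam e) (.tlam e') (.all τ)
  proj : ∀ {Δ Γ v v' τ₁ τ₂} (b : Bool), IsVal v → IsVal v' →
      R Δ Γ v v' (.prod τ₁ τ₂) →
      R Δ Γ (.proj b v) (.proj b v') (bif b then τ₂ else τ₁)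
  app : ∀ {Δ Γ v v' e e' τ₁ τ₂}, IsVal v → IsVal v' →
      R Δ Γ v v' (.arrow τ₁ τ₂) → R Δ Γ e e' τ₁ →
      R Δ Γ (.app v e) (.app v' e') τ₂
  case : ∀ {Δ Γ v v' τ'} {m : ℕ} {ts : Fin m → Ty} {es es' : Fin m → Tm},
      IsVal v → IsVal v' → R Δ Γ v v' (.mu m ts) →
      (∀ j : Fin m, R Δ (Ty.subst1 (.mu m ts) (ts j) :: Γ) (es j) (es' j) τ') →
      R Δ Γ (.case v m es) (.case v' m es') τ'
  tapp : ∀ {Δ Γ v v' τ σ}, IsVal v → IsVal v' → R Δ Γ v v' (.all τ) →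
      Ty.Wf Δ σ → R Δ Γ (.tapp v σ) (.tapp v' σ) (Ty.subst1 σ τ)
  choice : ∀ {Δ Γ}, CtxWf Δ Γ → R Δ Γ .choice .choice natTy

/-- May-adequacy. -/
def MayAdequate (R : TIRel) : Prop :=
  ∀ e e' τ, R 0 [] e e' τ → MayConv e → MayConv e'

/-- Must-adequacy. -/
def MustAdequate (R : TIRel) : Prop :=
  ∀ e e' τ, R 0 [] e e' τ → Must e → Must e'

/-- May-contextual approximation `Δ;Γ ⊢ e ≾↓ctx e' : τ`: the largest
may-adequate precongruence. -/
def CtxMay (Δ : ℕ) (Γ : List Ty) (e e' : Tm) (τ : Ty) : Prop :=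
  ∃ R : TIRel, WellTypedRel R ∧ ReflRel R ∧ TransRel R ∧ Compatible R ∧
    MayAdequate R ∧ R Δ Γ e e' τ

/-- Must-contextual approximation `Δ;Γ ⊢ e ≾⇓ctx e' : τ`: the largest
must-adequate precongruence. -/
def CtxMust (Δ : ℕ) (Γ : List Ty) (e e' : Tm) (τ : Ty) : Prop :=
  ∃ R : TIRel, WellTypedRel R ∧ ReflRel R ∧ TransRel R ∧ Compatible R ∧
    MustAdequate R ∧ R Δ Γ e e' τ

/-- May-contextual equivalence `≅↓ctx`. -/
def CtxMayEq (Δ : ℕ) (Γ : List Ty) (e e' : Tm) (τ : Ty) : Prop :=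
  CtxMay Δ Γ e e' τ ∧ CtxMay Δ Γ e' e τ

/-- Must-contextual equivalence `≅⇓ctx`. -/
def CtxMustEq (Δ : ℕ) (Γ : List Ty) (e e' : Tm) (τ : Ty) : Prop :=
  CtxMust Δ Γ e e' τ ∧ CtxMust Δ Γ e' e τ

/-- Contextual equivalence `≅ctx` (intersection of may and must). -/
def CtxEq (Δ : ℕ) (Γ : List Ty) (e e' : Tm) (τ : Ty) : Prop :=
  CtxMayEq Δ Γ e e' τ ∧ CtxMustEq Δ Γ e e' τ

end CountChoice

namespace CountChoice

/-! ## Step-indexed uniform value relations and the may logical relation -/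

/-- Step-indexed relations on terms (indexed over `ω`). -/
def SIRel : Type := ℕ → Tm → Tm → Prop

/-- Extending a relational environment (cons). -/
def consRel (r : SIRel) (ρ : ℕ → SIRel) : ℕ → SIRel
  | 0 => r
  | i + 1 => ρ i

/-- `r ∈ VRel_ω(σ,σ')`: an `ω`-indexed uniform relation on `Val(σ) × Val(σ')`:
it relates only closed values of the given types, its 0-th component is all of
`Val(σ) × Val(σ')`, and it is decreasing in the index. -/
def IsVRel (σ σ' : Ty) (r : SIRel) : Prop :=
  (∀ n v v', r n v v' → (IsVal v ∧ HasTy 0 [] v σ) ∧ (IsVal v' ∧ HasTy 0 [] v' σ')) ∧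
  (∀ v v', IsVal v → HasTy 0 [] v σ → IsVal v' → HasTy 0 [] v' σ' → r 0 v v') ∧
  (∀ n v v', r (n + 1) v v' → r n v v')

/-- The lift `r⊤` of a step-indexed relation to evaluation contexts
(for may-convergence). -/
def sTopMay (r : SIRel) (n : ℕ) (E E' : List Tm) : Prop :=
  ∀ j ≤ n, ∀ v v', r j v v' → MayConvN (plug E v) j → MayConv (plug E' v')

/-- The biorthogonal lift `r⊤⊤` of a step-indexed relation to terms
(for may-convergence). -/
def ttopMay (r : SIRel) : SIRel := fun n e e' =>
  ∀ j ≤ n, ∀ E E', sTopMay r j E E' → MayConvN (plug E e) j → MayConv (plug E' e')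

/-- The may logical relation `⟦τ⟧(r⃗)`, given closing type substitutions
`δ, δ'` and a relational environment `ρ` with `ρ i ∈ VRel_ω(δ i, δ' i)`;
it is an `ω`-indexed uniform relation on `Val(τδ) × Val(τδ')`.
Recursive types are interpreted by the unique (guarded) fixed point
`fix s.⋃ⱼ inⱼ(▷⟦τⱼ⟧(r⃗,s))`, where `(▷R)ₙ = ⋂_{k<n} Rₖ`. -/
def interpMay : Ty → (ℕ → Ty) → (ℕ → Ty) → (ℕ → SIRel) → SIRel
  | .var i, _, _, ρ => ρ i
  | .unit, _, _, _ => fun _ v v' => v = .unit ∧ v' = .unit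
  | .prod τ₁ τ₂, δ, δ', ρ => fun n v v' =>
      ∃ v₁ v₂ v₁' v₂', v = .pair v₁ v₂ ∧ v' = .pair v₁' v₂' ∧
        interpMay τ₁ δ δ' ρ n v₁ v₁' ∧ interpMay τ₂ δ δ' ρ n v₂ v₂'
  | .arrow τ₁ τ₂, δ, δ', ρ => fun n v v' =>
      ∃ e e', v = .lam e ∧ v' = .lam e' ∧
        HasTy 0 [] v ((Ty.arrow τ₁ τ₂).subst δ) ∧
        HasTy 0 [] v' ((Ty.arrow τ₁ τ₂).subst δ') ∧
        ∀ m ≤ n, ∀ u u', interpMay τ₁ δ δ' ρ m u u' →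
          ttopMay (interpMay τ₂ δ δ' ρ) m (subst1 u e) (subst1 u' e')
  | .all τ, δ, δ', ρ => fun n v v' =>
      ∃ e e', v = .tlam e ∧ v' = .tlam e' ∧
        HasTy 0 [] v ((Ty.all τ).subst δ) ∧
        HasTy 0 [] v' ((Ty.all τ).subst δ') ∧
        ∀ σ σ', Ty.Wf 0 σ → Ty.Wf 0 σ' → ∀ r : SIRel, IsVRel σ σ' r →
          ttopMay (interpMay τ (consTy σ δ) (consTy σ' δ') (consRel r ρ)) n
            (tySubst1 σ e) (tySubst1 σ' e')
  | .mu m ts, δ, δ', ρ => fun n =>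
      Nat.strongRecOn (motive := fun _ => Tm → Tm → Prop) n
        (fun n ih v v' =>
          ∃ j, ∃ h : j < m, ∃ u u',
            v = .inj j u ∧ v' = .inj j u' ∧ IsVal u ∧ IsVal u' ∧
            HasTy 0 [] u (Ty.subst (consTy ((Ty.mu m ts).subst δ) δ) (ts ⟨j, h⟩)) ∧
            HasTy 0 [] u' (Ty.subst (consTy ((Ty.mu m ts).subst δ') δ') (ts ⟨j, h⟩)) ∧
            ∀ k, k < n →
              interpMay (ts ⟨j, h⟩)
                (consTy ((Ty.mu m ts).subst δ) δ)
                (consTy ((Ty.mu m ts).subst δ') δ')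
                (consRel (fun i u₁ u₂ => ∃ hi : i < n, ih i hi u₁ u₂) ρ) k u u')

/-- Pointwise relatedness of value substitutions, `(γ,γ') ∈ ⟦Γ⟧(r⃗)ₙ`. -/
def EnvRelMay (Γ : List Ty) (δ δ' : ℕ → Ty) (ρ : ℕ → SIRel) (n : ℕ)
    (γ γ' : ℕ → Tm) : Prop :=
  ∀ i τ, Γ[i]? = some τ → interpMay τ δ δ' ρ n (γ i) (γ' i)

/-- Logical may-approximation `Δ;Γ ⊢ e ≾↓log e' : τ`. -/
def LogMay (Δ : ℕ) (Γ : List Ty) (e e' : Tm) (τ : Ty) : Prop :=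
  HasTy Δ Γ e τ ∧ HasTy Δ Γ e' τ ∧
  ∀ δ δ', TySubstOK Δ δ → TySubstOK Δ δ' →
  ∀ ρ : ℕ → SIRel, (∀ i < Δ, IsVRel (δ i) (δ' i) (ρ i)) →
  ∀ n γ γ', EnvRelMay Γ δ δ' ρ n γ γ' →
  ttopMay (interpMay τ δ δ' ρ) n ((e.tySubst δ).subst γ) ((e'.tySubst δ').subst γ')

end CountChoice

namespace CountChoice

/-! ## Ordinal-indexed uniform value relations and the must logical relation -/

/-- Ordinal-indexed relations on terms. -/
def OSIRel : Type 1 := Ordinal.{0} → Tm → Tm → Prop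

/-- Extending an ordinal-indexed relational environment (cons). -/
def consORel (r : OSIRel) (ρ : ℕ → OSIRel) : ℕ → OSIRel
  | 0 => r
  | i + 1 => ρ i

/-- `r ∈ VRel_ω₁(σ,σ')`: an ordinal-indexed uniform relation on
`Val(σ) × Val(σ')`: it relates only closed values of the given types, its
0-th component is all of `Val(σ) × Val(σ')`, it is decreasing at successors
and it is the intersection of the earlier components at limits. -/
def IsOVRel (σ σ' : Ty) (r : OSIRel) : Prop :=
  (∀ β v v', r β v v' → (IsVal v ∧ HasTy 0 [] v σ) ∧ (IsVal v' ∧ HasTy 0 [] v' σ')) ∧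
  (∀ v v', IsVal v → HasTy 0 [] v σ → IsVal v' → HasTy 0 [] v' σ' → r 0 v v') ∧
  (∀ β v v', r (β + 1) v v' → r β v v') ∧
  (∀ β, Order.IsSuccLimit β → ∀ v v', (r β v v' ↔ ∀ ν < β, r ν v v'))

/-- The lift `r⊤` of an ordinal-indexed relation to evaluation contexts
(for must-convergence). -/
def sTopMust (r : OSIRel) (β : Ordinal.{0}) (E E' : List Tm) : Prop :=
  ∀ ν ≤ β, ∀ v v', r ν v v' → MustStrat ν (plug E v) → Must (plug E' v')

/-- The biorthogonal lift `r⊤⊤` of an ordinal-indexed relation to terms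
(for must-convergence). -/
def ttopMust (r : OSIRel) : OSIRel := fun β e e' =>
  ∀ ν ≤ β, ∀ E E', sTopMust r ν E E' → MustStrat ν (plug E e) → Must (plug E' e')

/-- The must logical relation `⟦τ⟧(r⃗)`, an ordinal-indexed uniform relation,
defined exactly as the may logical relation but with the must-biorthogonal
lifts. -/
def interpMust : Ty → (ℕ → Ty) → (ℕ → Ty) → (ℕ → OSIRel) → OSIRel
  | .var i, _, _, ρ => ρ i
  | .unit, _, _, _ => fun _ v v' => v = .unit ∧ v' = .unit
  | .prod τ₁ τ₂, δ, δ', ρ => fun β v v' =>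
      ∃ v₁ v₂ v₁' v₂', v = .pair v₁ v₂ ∧ v' = .pair v₁' v₂' ∧
        interpMust τ₁ δ δ' ρ β v₁ v₁' ∧ interpMust τ₂ δ δ' ρ β v₂ v₂'
  | .arrow τ₁ τ₂, δ, δ', ρ => fun β v v' =>
      ∃ e e', v = .lam e ∧ v' = .lam e' ∧
        HasTy 0 [] v ((Ty.arrow τ₁ τ₂).subst δ) ∧
        HasTy 0 [] v' ((Ty.arrow τ₁ τ₂).subst δ') ∧
        ∀ ν ≤ β, ∀ u u', interpMust τ₁ δ δ' ρ ν u u' →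
          ttopMust (interpMust τ₂ δ δ' ρ) ν (subst1 u e) (subst1 u' e')
  | .all τ, δ, δ', ρ => fun β v v' =>
      ∃ e e', v = .tlam e ∧ v' = .tlam e' ∧
        HasTy 0 [] v ((Ty.all τ).subst δ) ∧
        HasTy 0 [] v' ((Ty.all τ).subst δ') ∧
        ∀ σ σ', Ty.Wf 0 σ → Ty.Wf 0 σ' → ∀ r : OSIRel, IsOVRel σ σ' r →
          ttopMust (interpMust τ (consTy σ δ) (consTy σ' δ') (consORel r ρ)) β
            (tySubst1 σ e) (tySubst1 σ' e')
  | .mu m ts, δ, δ', ρ => fun β =>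
      (wellFounded_lt (α := Ordinal.{0})).fix
        (C := fun _ => Tm → Tm → Prop)
        (fun β ih v v' =>
          ∃ j, ∃ h : j < m, ∃ u u',
            v = .inj j u ∧ v' = .inj j u' ∧ IsVal u ∧ IsVal u' ∧
            HasTy 0 [] u (Ty.subst (consTy ((Ty.mu m ts).subst δ) δ) (ts ⟨j, h⟩)) ∧
            HasTy 0 [] u' (Ty.subst (consTy ((Ty.mu m ts).subst δ') δ') (ts ⟨j, h⟩)) ∧
            ∀ ν, ν < β →
              interpMust (ts ⟨j, h⟩)
                (consTy ((Ty.mu m ts).subst δ) δ)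
                (consTy ((Ty.mu m ts).subst δ') δ')
                (consORel (fun i u₁ u₂ => ∃ hi : i < β, ih i hi u₁ u₂) ρ) ν u u')
        β

/-- Pointwise relatedness of value substitutions, `(γ,γ') ∈ ⟦Γ⟧(r⃗)_β`. -/
def EnvRelMust (Γ : List Ty) (δ δ' : ℕ → Ty) (ρ : ℕ → OSIRel) (β : Ordinal.{0})
    (γ γ' : ℕ → Tm) : Prop :=
  ∀ i τ, Γ[i]? = some τ → interpMust τ δ δ' ρ β (γ i) (γ' i)

/-- Logical must-approximation `Δ;Γ ⊢ e ≾⇓log e' : τ`. -/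
def LogMust (Δ : ℕ) (Γ : List Ty) (e e' : Tm) (τ : Ty) : Prop :=
  HasTy Δ Γ e τ ∧ HasTy Δ Γ e' τ ∧
  ∀ δ δ', TySubstOK Δ δ → TySubstOK Δ δ' →
  ∀ ρ : ℕ → OSIRel, (∀ i < Δ, IsOVRel (δ i) (δ' i) (ρ i)) →
  ∀ β < omega1, ∀ γ γ', EnvRelMust Γ δ δ' ρ β γ γ' →
  ttopMust (interpMust τ δ δ' ρ) β ((e.tySubst δ).subst γ) ((e'.tySubst δ').subst γ')

end CountChoice

namespace CountChoice

/-! ## Derived terms -/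

/-- `let x = e₁ in e₂`, i.e. `(λx.e₂) e₁`. -/
def letIn (e₁ e₂ : Tm) : Tm := .app (.lam e₂) e₁

/-- The term `δ_f = λy.case y of (in y'. f(λx.let r = y' y in r x))`,
where `f` is the term variable of de Bruijn index 0 outside. -/
def deltaTm : Tm :=
  .lam (.case (.var 0) 1
    ![.app (.var 2)
        (.lam (letIn (.app (.var 1) (.var 2)) (.app (.var 0) (.var 1))))])

/-- The fixed point combinator
`fix = Λα,β.λf.δ_f(in δ_f) : ∀α,β.((α→β)→(α→β))→(α→β)`. -/
def fixTm : Tm := .tlam (.tlam (.lam (.app deltaTm (.inj 0 deltaTm))))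

/-- `fix τ₁ τ₂ v`, i.e. `let x = fix τ₁ in let y = x τ₂ in y v`. -/
def fixApp (τ₁ τ₂ : Ty) (v : Tm) : Tm :=
  letIn (.tapp fixTm τ₁)
    (letIn (.tapp (.var 0) τ₂) (.app (.var 0) (v.rename (· + 2))))

/-- The identity `id = λx.x`. -/
def idTm : Tm := .lam (.var 0)

/-- The divergent term `Ω = Λα.(fix 1 α)(λf.f)⟨⟩ : ∀α.α`. -/
def OmegaTm : Tm :=
  .tlam (letIn (fixApp .unit (.var 0) (.lam (.var 0))) (.app (.var 0) .unit))

/-- Erratic choice `e₁ or e₂`, i.e.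
`let x = ? in case x of (in₁ y.e₁ | in₂ y.e₂)`. -/
def orTm (e₁ e₂ : Tm) : Tm :=
  letIn .choice (.case (.var 0) 2 ![e₁.rename (· + 2), e₂.rename (· + 2)])

/-- Type application of a term: `w τ` abbreviates `let f = w in f τ`. -/
def letTapp (w : Tm) (τ : Ty) : Tm := letIn w (.tapp (.var 0) τ)

/-- `(λx.x t) w`: applies (the eventual value of) `w` to the closed term `t`. -/
def letAppArg (w t : Tm) : Tm := .app (.lam (.app (.var 0) t)) w

end CountChoice

namespace CountChoice

set_option linter.unusedSectionVars false
set_option linter.unusedVariables false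


/-! ### Type-level renaming/substitution laws -/

theorem Ty.rename_congr {f g : ℕ → ℕ} (h : ∀ i, f i = g i) : ∀ τ : Ty, τ.rename f = τ.rename g
  | .var i => by simp [Ty.rename, h]
  | .unit => rfl
  | .prod a b => by simp [Ty.rename, Ty.rename_congr h a, Ty.rename_congr h b]
  | .arrow a b => by simp [Ty.rename, Ty.rename_congr h a, Ty.rename_congr h b]
  | .mu m ts => by
      simp only [Ty.rename]
      congr 1; funext j
      exact Ty.rename_congr (fun i => by cases i <;> simp [liftR, h]) (ts j)
  | .all a => by
      simp only [Ty.rename]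
      congr 1
      exact Ty.rename_congr (fun i => by cases i <;> simp [liftR, h]) a

theorem Ty.subst_congr {f g : ℕ → Ty} (h : ∀ i, f i = g i) : ∀ τ : Ty, τ.subst f = τ.subst g
  | .var i => by simp [Ty.subst, h]
  | .unit => rfl
  | .prod a b => by simp [Ty.subst, Ty.subst_congr h a, Ty.subst_congr h b]
  | .arrow a b => by simp [Ty.subst, Ty.subst_congr h a, Ty.subst_congr h b]
  | .mu m ts => by
      simp only [Ty.subst]
      congr 1; funext j
      exact Ty.subst_congr (fun i => by cases i <;> simp [liftS, h]) (ts j)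
  | .all a => by
      simp only [Ty.subst]
      congr 1
      exact Ty.subst_congr (fun i => by cases i <;> simp [liftS, h]) a

theorem Ty.rename_rename (f g : ℕ → ℕ) : ∀ τ : Ty, (τ.rename g).rename f = τ.rename (fun i => f (g i))
  | .var i => rfl
  | .unit => rfl
  | .prod a b => by simp [Ty.rename, Ty.rename_rename f g a, Ty.rename_rename f g b]
  | .arrow a b => by simp [Ty.rename, Ty.rename_rename f g a, Ty.rename_rename f g b]
  | .mu m ts => by
      simp only [Ty.rename]
      congr 1; funext j
      rw [Ty.rename_rename (liftR f) (liftR g) (ts j)]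
      exact Ty.rename_congr (fun i => by cases i <;> simp [liftR]) (ts j)
  | .all a => by
      simp only [Ty.rename]
      rw [Ty.rename_rename (liftR f) (liftR g) a]
      exact congrArg _ (Ty.rename_congr (fun i => by cases i <;> simp [liftR]) a)

theorem Ty.subst_rename (σ : ℕ → Ty) (g : ℕ → ℕ) :
    ∀ τ : Ty, (τ.rename g).subst σ = τ.subst (fun i => σ (g i))
  | .var i => rfl
  | .unit => rfl
  | .prod a b => by simp [Ty.rename, Ty.subst, Ty.subst_rename σ g a, Ty.subst_rename σ g b]
  | .arrow a b => by simp [Ty.rename, Ty.subst, Ty.subst_rename σ g a, Ty.subst_rename σ g b]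
  | .mu m ts => by
      simp only [Ty.rename, Ty.subst]
      congr 1; funext j
      rw [Ty.subst_rename (liftS σ) (liftR g) (ts j)]
      exact Ty.subst_congr (fun i => by cases i <;> simp [liftS, liftR]) (ts j)
  | .all a => by
      simp only [Ty.rename, Ty.subst]
      rw [Ty.subst_rename (liftS σ) (liftR g) a]
      exact congrArg _ (Ty.subst_congr (fun i => by cases i <;> simp [liftS, liftR]) a)

theorem Ty.rename_subst (f : ℕ → ℕ) (σ : ℕ → Ty) :
    ∀ τ : Ty, (τ.subst σ).rename f = τ.subst (fun i => (σ i).rename f)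
  | .var i => rfl
  | .unit => rfl
  | .prod a b => by simp [Ty.rename, Ty.subst, Ty.rename_subst f σ a, Ty.rename_subst f σ b]
  | .arrow a b => by simp [Ty.rename, Ty.subst, Ty.rename_subst f σ a, Ty.rename_subst f σ b]
  | .mu m ts => by
      simp only [Ty.rename, Ty.subst]
      congr 1; funext j
      rw [Ty.rename_subst (liftR f) (liftS σ) (ts j)]
      refine Ty.subst_congr (fun i => ?_) (ts j)
      cases i with
      | zero => rfl
      | succ i =>
          simp only [liftS, Ty.rename_rename]
          exact Ty.rename_congr (fun k => rfl) (σ i)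
  | .all a => by
      simp only [Ty.rename, Ty.subst]
      rw [Ty.rename_subst (liftR f) (liftS σ) a]
      refine congrArg _ (Ty.subst_congr (fun i => ?_) a)
      cases i with
      | zero => rfl
      | succ i =>
          simp only [liftS, Ty.rename_rename]
          exact Ty.rename_congr (fun k => rfl) (σ i)

theorem Ty.subst_subst (σ' σ : ℕ → Ty) :
    ∀ τ : Ty, (τ.subst σ).subst σ' = τ.subst (fun i => (σ i).subst σ')
  | .var i => rfl
  | .unit => rfl
  | .prod a b => by simp [Ty.subst, Ty.subst_subst σ' σ a, Ty.subst_subst σ' σ b]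
  | .arrow a b => by simp [Ty.subst, Ty.subst_subst σ' σ a, Ty.subst_subst σ' σ b]
  | .mu m ts => by
      simp only [Ty.subst]
      congr 1; funext j
      rw [Ty.subst_subst (liftS σ') (liftS σ) (ts j)]
      refine Ty.subst_congr (fun i => ?_) (ts j)
      cases i with
      | zero => rfl
      | succ i =>
          simp only [liftS, Ty.subst_rename, Ty.rename_subst]
  | .all a => by
      simp only [Ty.subst]
      rw [Ty.subst_subst (liftS σ') (liftS σ) a]
      refine congrArg _ (Ty.subst_congr (fun i => ?_) a)
      cases i with
      | zero => rfl
      | succ i =>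
          simp only [liftS, Ty.subst_rename, Ty.rename_subst]

theorem Ty.subst_var : ∀ τ : Ty, τ.subst Ty.var = τ
  | .var i => rfl
  | .unit => rfl
  | .prod a b => by simp [Ty.subst, Ty.subst_var a, Ty.subst_var b]
  | .arrow a b => by simp [Ty.subst, Ty.subst_var a, Ty.subst_var b]
  | .mu m ts => by
      simp only [Ty.subst]
      congr 1; funext j
      rw [Ty.subst_congr (f := liftS Ty.var) (g := Ty.var) (fun i => by cases i <;> rfl)]
      exact Ty.subst_var (ts j)
  | .all a => by
      simp only [Ty.subst]
      rw [Ty.subst_congr (f := liftS Ty.var) (g := Ty.var) (fun i => by cases i <;> rfl)]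
      exact congrArg _ (Ty.subst_var a)

/-- substitution into a single substitution: `(B[A/0])δ = (B(liftS δ))[(Aδ)/0]`. -/
theorem Ty.subst1_subst (A : Ty) (δ : ℕ → Ty) (B : Ty) :
    (Ty.subst1 A B).subst δ = Ty.subst1 (A.subst δ) (B.subst (liftS δ)) := by
  unfold Ty.subst1
  rw [Ty.subst_subst, Ty.subst_subst]
  refine Ty.subst_congr (fun i => ?_) B
  cases i with
  | zero => rfl
  | succ i =>
      simp only [consTy, liftS, Ty.subst_rename]
      rw [Ty.subst_congr (g := Ty.var) (fun k => rfl), Ty.subst_var]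
      rfl

theorem Ty.subst1_rename (A : Ty) (f : ℕ → ℕ) (B : Ty) :
    (Ty.subst1 A B).rename f = Ty.subst1 (A.rename f) (B.rename (liftR f)) := by
  unfold Ty.subst1
  rw [Ty.rename_subst, Ty.subst_rename]
  refine Ty.subst_congr (fun i => ?_) B
  cases i <;> rfl

theorem Ty.rename_succ_subst_liftS (δ : ℕ → Ty) (τ : Ty) :
    (τ.rename Nat.succ).subst (liftS δ) = (τ.subst δ).rename Nat.succ := by
  rw [Ty.subst_rename, Ty.rename_subst]
  exact Ty.subst_congr (fun i => rfl) τ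

theorem Ty.rename_succ_rename_liftR (f : ℕ → ℕ) (τ : Ty) :
    (τ.rename Nat.succ).rename (liftR f) = (τ.rename f).rename Nat.succ := by
  rw [Ty.rename_rename, Ty.rename_rename]
  exact Ty.rename_congr (fun i => rfl) τ

/-! ### Well-formedness lemmas -/

theorem Ty.wf_rename : ∀ (τ : Ty) {Δ Δ' : ℕ} {f : ℕ → ℕ},
    (∀ i, i < Δ → f i < Δ') → τ.Wf Δ → (τ.rename f).Wf Δ'
  | .var i, _, _, _, hf, hw => hf i hw
  | .unit, _, _, _, _, _ => trivial
  | .prod a b, _, _, _, hf, hw => ⟨a.wf_rename hf hw.1, b.wf_rename hf hw.2⟩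
  | .arrow a b, _, _, _, hf, hw => ⟨a.wf_rename hf hw.1, b.wf_rename hf hw.2⟩
  | .mu m ts, _, _, _, hf, hw => fun j => (ts j).wf_rename
      (fun i hi => by cases i with
        | zero => simp [liftR]
        | succ i => simpa [liftR, Nat.succ_lt_succ_iff] using hf i (Nat.lt_of_succ_lt_succ hi))
      (hw j)
  | .all a, _, _, _, hf, hw => a.wf_rename
      (fun i hi => by cases i with
        | zero => simp [liftR]
        | succ i => simpa [liftR, Nat.succ_lt_succ_iff] using hf i (Nat.lt_of_succ_lt_succ hi))
      hw

theorem Ty.wf_subst : ∀ (τ : Ty) {Δ Δ' : ℕ} {σ : ℕ → Ty},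
    (∀ i, i < Δ → (σ i).Wf Δ') → τ.Wf Δ → (τ.subst σ).Wf Δ'
  | .var i, _, _, _, hf, hw => hf i hw
  | .unit, _, _, _, _, _ => trivial
  | .prod a b, _, _, _, hf, hw => ⟨a.wf_subst hf hw.1, b.wf_subst hf hw.2⟩
  | .arrow a b, _, _, _, hf, hw => ⟨a.wf_subst hf hw.1, b.wf_subst hf hw.2⟩
  | .mu m ts, _, _, _, hf, hw => fun j => (ts j).wf_subst
      (fun i hi => by cases i with
        | zero => exact Nat.succ_pos _
        | succ i =>
            simp only [liftS]
            exact Ty.wf_rename _ (fun k hk => Nat.succ_lt_succ hk) (hf i (Nat.lt_of_succ_lt_succ hi)))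
      (hw j)
  | .all a, _, _, _, hf, hw => a.wf_subst
      (fun i hi => by cases i with
        | zero => exact Nat.succ_pos _
        | succ i =>
            simp only [liftS]
            exact Ty.wf_rename _ (fun k hk => Nat.succ_lt_succ hk) (hf i (Nat.lt_of_succ_lt_succ hi)))
      hw

theorem Ty.wf_mono : ∀ (τ : Ty) {Δ Δ' : ℕ}, Δ ≤ Δ' → τ.Wf Δ → τ.Wf Δ'
  | .var i, _, _, hle, hw => Nat.lt_of_lt_of_le hw hle
  | .unit, _, _, _, _ => trivial
  | .prod a b, _, _, hle, hw => ⟨a.wf_mono hle hw.1, b.wf_mono hle hw.2⟩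
  | .arrow a b, _, _, hle, hw => ⟨a.wf_mono hle hw.1, b.wf_mono hle hw.2⟩
  | .mu m ts, _, _, hle, hw => fun j => (ts j).wf_mono (Nat.succ_le_succ hle) (hw j)
  | .all a, _, _, hle, hw => a.wf_mono (Nat.succ_le_succ hle) hw

theorem Ty.rename_id_of_wf : ∀ (τ : Ty) {Δ : ℕ} {f : ℕ → ℕ},
    (∀ i, i < Δ → f i = i) → τ.Wf Δ → τ.rename f = τ
  | .var i, _, _, hf, hw => by simp [Ty.rename, hf i hw]
  | .unit, _, _, _, _ => rfl
  | .prod a b, _, _, hf, hw => by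
      simp [Ty.rename, a.rename_id_of_wf hf hw.1, b.rename_id_of_wf hf hw.2]
  | .arrow a b, _, _, hf, hw => by
      simp [Ty.rename, a.rename_id_of_wf hf hw.1, b.rename_id_of_wf hf hw.2]
  | .mu m ts, _, _, hf, hw => by
      simp only [Ty.rename]
      congr 1; funext j
      exact (ts j).rename_id_of_wf
        (fun i hi => by cases i with
          | zero => rfl
          | succ i => simp [liftR, hf i (Nat.lt_of_succ_lt_succ hi)])
        (hw j)
  | .all a, _, _, hf, hw => by
      simp only [Ty.rename]
      exact congrArg _ (a.rename_id_of_wf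
        (fun i hi => by cases i with
          | zero => rfl
          | succ i => simp [liftR, hf i (Nat.lt_of_succ_lt_succ hi)])
        hw)

theorem Ty.subst_id_of_wf : ∀ (τ : Ty) {Δ : ℕ} {σ : ℕ → Ty},
    (∀ i, i < Δ → σ i = .var i) → τ.Wf Δ → τ.subst σ = τ
  | .var i, _, _, hf, hw => by simp [Ty.subst, hf i hw]
  | .unit, _, _, _, _ => rfl
  | .prod a b, _, _, hf, hw => by
      simp [Ty.subst, a.subst_id_of_wf hf hw.1, b.subst_id_of_wf hf hw.2]
  | .arrow a b, _, _, hf, hw => by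
      simp [Ty.subst, a.subst_id_of_wf hf hw.1, b.subst_id_of_wf hf hw.2]
  | .mu m ts, _, _, hf, hw => by
      simp only [Ty.subst]
      congr 1; funext j
      exact (ts j).subst_id_of_wf
        (fun i hi => by cases i with
          | zero => rfl
          | succ i => simp [liftS, hf i (Nat.lt_of_succ_lt_succ hi), Ty.rename])
        (hw j)
  | .all a, _, _, hf, hw => by
      simp only [Ty.subst]
      exact congrArg _ (a.subst_id_of_wf
        (fun i hi => by cases i with
          | zero => rfl
          | succ i => simp [liftS, hf i (Nat.lt_of_succ_lt_succ hi), Ty.rename])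
        hw)

theorem natTy_wf (Δ : ℕ) : natTy.Wf Δ := by
  intro j
  fin_cases j
  · exact trivial
  · exact Nat.succ_pos Δ

theorem natTy_subst (δ : ℕ → Ty) : natTy.subst δ = natTy :=
  Ty.subst_id_of_wf natTy
    (fun i hi => absurd hi (by omega))
    (natTy_wf 0)



/-! ### Values under renaming / substitution -/

theorem IsVal.rename {v : Tm} (hv : IsVal v) (f : ℕ → ℕ) : IsVal (v.rename f) := by
  induction hv generalizing f with
  | var => exact .var
  | unit => exact .unit
  | pair _ _ ih1 ih2 => exact .pair (ih1 f) (ih2 f)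
  | lam => exact .lam
  | inj _ ih => exact .inj (ih f)
  | tlam => exact .tlam

theorem IsVal.tyRename {v : Tm} (hv : IsVal v) (f : ℕ → ℕ) : IsVal (v.tyRename f) := by
  induction hv generalizing f with
  | var => exact .var
  | unit => exact .unit
  | pair _ _ ih1 ih2 => exact .pair (ih1 f) (ih2 f)
  | lam => exact .lam
  | inj _ ih => exact .inj (ih f)
  | tlam => exact .tlam

theorem IsVal.subst {v : Tm} (hv : IsVal v) (γ : ℕ → Tm) (hγ : ∀ i, IsVal (γ i)) :
    IsVal (v.subst γ) := by
  induction hv generalizing γ with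
  | var => exact hγ _
  | unit => exact .unit
  | pair _ _ ih1 ih2 => exact .pair (ih1 γ hγ) (ih2 γ hγ)
  | lam => exact .lam
  | inj _ ih => exact .inj (ih γ hγ)
  | tlam => exact .tlam

theorem liftT_isVal {γ : ℕ → Tm} (hγ : ∀ i, IsVal (γ i)) : ∀ i, IsVal (liftT γ i) := by
  intro i
  cases i with
  | zero => exact .var
  | succ i => exact (hγ i).rename _

theorem tyRenamed_isVal {γ : ℕ → Tm} (hγ : ∀ i, IsVal (γ i)) (f : ℕ → ℕ) :
    ∀ i, IsVal ((γ i).tyRename f) := fun i => (hγ i).tyRename f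

/-! ### Context well-formedness helpers -/

theorem CtxWf.nil {Δ : ℕ} : CtxWf Δ [] := fun τ h => absurd h List.not_mem_nil

theorem CtxWf.cons {Δ : ℕ} {τ : Ty} {Γ : List Ty} (hτ : τ.Wf Δ) (hΓ : CtxWf Δ Γ) :
    CtxWf Δ (τ :: Γ) := by
  intro κ hκ
  rcases List.mem_cons.1 hκ with rfl | hκ
  · exact hτ
  · exact hΓ κ hκ

theorem CtxWf.map_renameSucc {Δ : ℕ} {Γ : List Ty} (hΓ : CtxWf Δ Γ) :
    CtxWf (Δ + 1) (Γ.map (Ty.rename Nat.succ)) := by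
  intro κ hκ
  rcases List.mem_map.1 hκ with ⟨τ, hτ, rfl⟩
  exact Ty.wf_rename τ (fun i hi => Nat.succ_lt_succ hi) (hΓ τ hτ)

theorem CtxWf.map_rename {Δ Δ' : ℕ} {f : ℕ → ℕ} {Γ : List Ty} (hΓ : CtxWf Δ Γ)
    (hf : ∀ i, i < Δ → f i < Δ') : CtxWf Δ' (Γ.map (Ty.rename f)) := by
  intro κ hκ
  rcases List.mem_map.1 hκ with ⟨τ, hτ, rfl⟩
  exact Ty.wf_rename τ hf (hΓ τ hτ)

theorem CtxWf.map_subst {Δ Δ' : ℕ} {δ : ℕ → Ty} {Γ : List Ty} (hΓ : CtxWf Δ Γ)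
    (hδ : ∀ i, i < Δ → (δ i).Wf Δ') : CtxWf Δ' (Γ.map (Ty.subst δ)) := by
  intro κ hκ
  rcases List.mem_map.1 hκ with ⟨τ, hτ, rfl⟩
  exact Ty.wf_subst τ hδ (hΓ τ hτ)

/-! ### Closedness: typed terms are invariant under off-support renamings/substitutions -/

theorem HasTy.rename_id {Δ : ℕ} {Γ : List Ty} {e : Tm} {τ : Ty} (h : HasTy Δ Γ e τ) :
    ∀ {f : ℕ → ℕ}, (∀ i, i < Γ.length → f i = i) → e.rename f = e := by
  induction h with
  | var _ hx =>
      intro f hf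
      simp only [Tm.rename]
      rw [hf _ (List.getElem?_eq_some_iff.1 hx).1]
  | unit => intro f hf; rfl
  | pair _ _ _ _ ih1 ih2 => intro f hf; simp only [Tm.rename]; rw [ih1 hf, ih2 hf]
  | lam _ _ ih =>
      intro f hf
      simp only [Tm.rename]
      rw [ih (fun i hi => by cases i with
        | zero => rfl
        | succ i => simp only [liftR]; rw [hf i (by simpa using Nat.lt_of_succ_lt_succ hi)])]
  | inj _ _ _ _ ih => intro f hf; simp only [Tm.rename]; rw [ih hf]
  | tlam _ ih =>
      intro f hf
      simp only [Tm.rename]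
      rw [ih (fun i hi => hf i (by simpa using hi))]
  | proj _ _ _ ih => intro f hf; simp only [Tm.rename]; rw [ih hf]
  | app _ _ _ ih1 ih2 => intro f hf; simp only [Tm.rename]; rw [ih1 hf, ih2 hf]
  | case _ _ _ ih ihs =>
      intro f hf
      simp only [Tm.rename]
      rw [ih hf]
      congr 1
      funext j
      exact ihs j (fun i hi => by cases i with
        | zero => rfl
        | succ i => simp only [liftR]; rw [hf i (by simpa using Nat.lt_of_succ_lt_succ hi)])
  | tapp _ _ _ ih => intro f hf; simp only [Tm.rename]; rw [ih hf]
  | choice _ => intro f hf; rfl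

theorem HasTy.tyRename_id {Δ : ℕ} {Γ : List Ty} {e : Tm} {τ : Ty} (h : HasTy Δ Γ e τ) :
    ∀ {f : ℕ → ℕ}, (∀ i, i < Δ → f i = i) → e.tyRename f = e := by
  induction h with
  | var _ hx => intro f hf; rfl
  | unit => intro f hf; rfl
  | pair _ _ _ _ ih1 ih2 => intro f hf; simp only [Tm.tyRename]; rw [ih1 hf, ih2 hf]
  | lam _ _ ih => intro f hf; simp only [Tm.tyRename]; rw [ih hf]
  | inj _ _ _ _ ih => intro f hf; simp only [Tm.tyRename]; rw [ih hf]
  | tlam _ ih =>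
      intro f hf
      simp only [Tm.tyRename]
      rw [ih (fun i hi => by cases i with
        | zero => rfl
        | succ i => simp only [liftR]; rw [hf i (Nat.lt_of_succ_lt_succ hi)])]
  | proj _ _ _ ih => intro f hf; simp only [Tm.tyRename]; rw [ih hf]
  | app _ _ _ ih1 ih2 => intro f hf; simp only [Tm.tyRename]; rw [ih1 hf, ih2 hf]
  | case _ _ _ ih ihs =>
      intro f hf
      simp only [Tm.tyRename]
      rw [ih hf]
      congr 1
      funext j
      exact ihs j hf
  | @tapp _ _ _ _ σ' _ _ hwf ih =>
      intro f hf
      simp only [Tm.tyRename]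
      rw [ih hf, Ty.rename_id_of_wf σ' hf hwf]
  | choice _ => intro f hf; rfl

theorem HasTy.subst_id {Δ : ℕ} {Γ : List Ty} {e : Tm} {τ : Ty} (h : HasTy Δ Γ e τ) :
    ∀ {γ : ℕ → Tm}, (∀ i, i < Γ.length → γ i = .var i) → e.subst γ = e := by
  induction h with
  | var _ hx =>
      intro γ hγ
      exact hγ _ (List.getElem?_eq_some_iff.1 hx).1
  | unit => intro γ hγ; rfl
  | pair _ _ _ _ ih1 ih2 => intro γ hγ; simp only [Tm.subst]; rw [ih1 hγ, ih2 hγ]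
  | lam _ _ ih =>
      intro γ hγ
      simp only [Tm.subst]
      rw [ih (fun i hi => by cases i with
        | zero => rfl
        | succ i =>
            simp only [liftT]
            rw [hγ i (by simpa using Nat.lt_of_succ_lt_succ hi)]
            rfl)]
  | inj _ _ _ _ ih => intro γ hγ; simp only [Tm.subst]; rw [ih hγ]
  | tlam _ ih =>
      intro γ hγ
      simp only [Tm.subst]
      rw [ih (fun i hi => by
        rw [hγ i (by simpa using hi)]
        rfl)]
  | proj _ _ _ ih => intro γ hγ; simp only [Tm.subst]; rw [ih hγ]
  | app _ _ _ ih1 ih2 => intro γ hγ; simp only [Tm.subst]; rw [ih1 hγ, ih2 hγ]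
  | case _ _ _ ih ihs =>
      intro γ hγ
      simp only [Tm.subst]
      rw [ih hγ]
      congr 1
      funext j
      exact ihs j (fun i hi => by cases i with
        | zero => rfl
        | succ i =>
            simp only [liftT]
            rw [hγ i (by simpa using Nat.lt_of_succ_lt_succ hi)]
            rfl)
  | tapp _ _ _ ih => intro γ hγ; simp only [Tm.subst]; rw [ih hγ]
  | choice _ => intro γ hγ; rfl

theorem HasTy.tySubst_id {Δ : ℕ} {Γ : List Ty} {e : Tm} {τ : Ty} (h : HasTy Δ Γ e τ) :
    ∀ {δ : ℕ → Ty}, (∀ i, i < Δ → δ i = .var i) → e.tySubst δ = e := by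
  induction h with
  | var _ hx => intro δ hδ; rfl
  | unit => intro δ hδ; rfl
  | pair _ _ _ _ ih1 ih2 => intro δ hδ; simp only [Tm.tySubst]; rw [ih1 hδ, ih2 hδ]
  | lam _ _ ih => intro δ hδ; simp only [Tm.tySubst]; rw [ih hδ]
  | inj _ _ _ _ ih => intro δ hδ; simp only [Tm.tySubst]; rw [ih hδ]
  | tlam _ ih =>
      intro δ hδ
      simp only [Tm.tySubst]
      rw [ih (fun i hi => by cases i with
        | zero => rfl
        | succ i => simp only [liftS]; rw [hδ i (Nat.lt_of_succ_lt_succ hi)]; rfl)]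
  | proj _ _ _ ih => intro δ hδ; simp only [Tm.tySubst]; rw [ih hδ]
  | app _ _ _ ih1 ih2 => intro δ hδ; simp only [Tm.tySubst]; rw [ih1 hδ, ih2 hδ]
  | case _ _ _ ih ihs =>
      intro δ hδ
      simp only [Tm.tySubst]
      rw [ih hδ]
      congr 1
      funext j
      exact ihs j hδ
  | @tapp _ _ _ _ σ' _ _ hwf ih =>
      intro δ hδ
      simp only [Tm.tySubst]
      rw [ih hδ, Ty.subst_id_of_wf σ' hδ hwf]
  | choice _ => intro δ hδ; rfl

/-! ### Regularity -/

theorem Ty.wf_rename_rev : ∀ (τ : Ty) {Δ Δ' : ℕ} {f : ℕ → ℕ},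
    (∀ i, f i < Δ' → i < Δ) → (τ.rename f).Wf Δ' → τ.Wf Δ
  | .var i, _, _, _, hf, hw => hf i hw
  | .unit, _, _, _, _, _ => trivial
  | .prod a b, _, _, _, hf, hw => ⟨a.wf_rename_rev hf hw.1, b.wf_rename_rev hf hw.2⟩
  | .arrow a b, _, _, _, hf, hw => ⟨a.wf_rename_rev hf hw.1, b.wf_rename_rev hf hw.2⟩
  | .mu m ts, _, _, _, hf, hw => fun j => (ts j).wf_rename_rev
      (fun i hi => by cases i with
        | zero => exact Nat.succ_pos _
        | succ i =>
            simp only [liftR] at hi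
            exact Nat.succ_lt_succ (hf i (Nat.lt_of_succ_lt_succ hi)))
      (hw j)
  | .all a, _, _, _, hf, hw => a.wf_rename_rev
      (fun i hi => by cases i with
        | zero => exact Nat.succ_pos _
        | succ i =>
            simp only [liftR] at hi
            exact Nat.succ_lt_succ (hf i (Nat.lt_of_succ_lt_succ hi)))
      hw

theorem HasTy.ctxWf {Δ : ℕ} {Γ : List Ty} {e : Tm} {τ : Ty} (h : HasTy Δ Γ e τ) :
    CtxWf Δ Γ := by
  induction h with
  | var hwf _ => exact hwf
  | unit hwf => exact hwf
  | pair _ _ _ _ ih1 _ => exact ih1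
  | lam _ _ ih => exact fun κ hκ => ih κ (List.mem_cons_of_mem _ hκ)
  | inj _ _ _ _ ih => exact ih
  | tlam _ ih =>
      intro κ hκ
      exact Ty.wf_rename_rev κ (fun i hi => Nat.lt_of_succ_lt_succ hi)
        (ih _ (List.mem_map_of_mem hκ))
  | proj _ _ _ ih => exact ih
  | app _ _ _ ih1 _ => exact ih1
  | case _ _ _ ih _ => exact ih
  | tapp _ _ _ ih => exact ih
  | choice hwf => exact hwf

/-! ### Weakening -/

theorem HasTy.weaken {Δ : ℕ} {Γ : List Ty} {e : Tm} {τ : Ty} (h : HasTy Δ Γ e τ) :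
    ∀ {Δ' : ℕ} {Γ' : List Ty}, Δ ≤ Δ' → (∀ (x : ℕ) (κ : Ty), Γ[x]? = some κ → Γ'[x]? = some κ) →
    CtxWf Δ' Γ' → HasTy Δ' Γ' e τ := by
  induction h with
  | var _ hx => intro Δ' Γ' hle hΓ hwf; exact .var hwf (hΓ _ _ hx)
  | unit => intro Δ' Γ' hle hΓ hwf; exact .unit hwf
  | pair h1 h2 _ _ ih1 ih2 =>
      intro Δ' Γ' hle hΓ hwf
      exact .pair h1 h2 (ih1 hle hΓ hwf) (ih2 hle hΓ hwf)
  | lam hwτ _ ih =>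
      intro Δ' Γ' hle hΓ hwf
      refine .lam (Ty.wf_mono _ hle hwτ) (ih hle (fun x κ hx => ?_) (.cons (Ty.wf_mono _ hle hwτ) hwf))
      cases x with
      | zero => simpa using hx
      | succ x => simpa using hΓ _ _ (by simpa using hx)
  | inj hj hval hwf0 _ ih =>
      intro Δ' Γ' hle hΓ hwf
      exact .inj hj hval (Ty.wf_mono _ hle hwf0) (ih hle hΓ hwf)
  | tlam _ ih =>
      intro Δ' Γ' hle hΓ hwf
      refine .tlam (ih (Nat.succ_le_succ hle) (fun x κ hx => ?_) hwf.map_renameSucc)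
      simp only [List.getElem?_map] at hx ⊢
      rcases Option.map_eq_some_iff.1 hx with ⟨κ', hκ', rfl⟩
      rw [hΓ _ _ hκ']
      rfl
  | proj b hval _ ih => intro Δ' Γ' hle hΓ hwf; exact .proj b hval (ih hle hΓ hwf)
  | app hval _ _ ih1 ih2 =>
      intro Δ' Γ' hle hΓ hwf
      exact .app hval (ih1 hle hΓ hwf) (ih2 hle hΓ hwf)
  | case hval _ hbr ih ihs =>
      intro Δ' Γ' hle hΓ hwf
      refine .case hval (ih hle hΓ hwf) (fun j => ihs j hle (fun x κ hx => ?_)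
        (.cons (Ty.wf_mono _ hle ((hbr j).ctxWf _ List.mem_cons_self)) hwf))
      cases x with
      | zero => simpa using hx
      | succ x => simpa using hΓ _ _ (by simpa using hx)
  | tapp hval _ hwσ ih =>
      intro Δ' Γ' hle hΓ hwf
      exact .tapp hval (ih hle hΓ hwf) (Ty.wf_mono _ hle hwσ)
  | choice _ => intro Δ' Γ' hle hΓ hwf; exact .choice hwf

/-! ### Numerals -/

theorem numeral_isVal : ∀ n, IsVal (numeral n)
  | 0 => .inj .unit
  | n + 1 => .inj (numeral_isVal n)

theorem numeral_hasTy {Δ : ℕ} {Γ : List Ty} (hwf : CtxWf Δ Γ) : ∀ n, HasTy Δ Γ (numeral n) natTy := by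
  intro n
  induction n with
  | zero =>
      refine HasTy.inj (m := 2) (ts := ![.unit, .var 0]) (j := 0) (by omega) .unit (natTy_wf Δ) ?_
      exact .unit hwf
  | succ n ih =>
      refine HasTy.inj (m := 2) (ts := ![.unit, .var 0]) (j := 1) (by omega) (numeral_isVal n)
        (natTy_wf Δ) ?_
      exact ih



/-- The typed compatible closure of `{(Λ.bu, Λ.bv), (Λ.bv, Λ.bu)}` at type `∀α.σ0`. -/
inductive C (bu bv : Tm) (σ0 : Ty) : ℕ → List Ty → Tm → Tm → Ty → Prop where
  | baseUV : ∀ {Δ Γ}, CtxWf Δ Γ → C bu bv σ0 Δ Γ (.tlam bu) (.tlam bv) (.all σ0)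
  | baseVU : ∀ {Δ Γ}, CtxWf Δ Γ → C bu bv σ0 Δ Γ (.tlam bv) (.tlam bu) (.all σ0)
  | var : ∀ {Δ Γ x τ}, CtxWf Δ Γ → Γ[x]? = some τ → C bu bv σ0 Δ Γ (.var x) (.var x) τ
  | unit : ∀ {Δ Γ}, CtxWf Δ Γ → C bu bv σ0 Δ Γ .unit .unit .unit
  | pair : ∀ {Δ Γ v₁ v₂ v₁' v₂' τ₁ τ₂}, IsVal v₁ → IsVal v₂ → IsVal v₁' → IsVal v₂' →
      C bu bv σ0 Δ Γ v₁ v₁' τ₁ → C bu bv σ0 Δ Γ v₂ v₂' τ₂ →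
      C bu bv σ0 Δ Γ (.pair v₁ v₂) (.pair v₁' v₂') (.prod τ₁ τ₂)
  | lam : ∀ {Δ Γ e e' τ₁ τ₂}, Ty.Wf Δ τ₁ → C bu bv σ0 Δ (τ₁ :: Γ) e e' τ₂ →
      C bu bv σ0 Δ Γ (.lam e) (.lam e') (.arrow τ₁ τ₂)
  | inj : ∀ {Δ Γ v v'} {m : ℕ} {ts : Fin m → Ty} {j : ℕ} (h : j < m),
      IsVal v → IsVal v' → Ty.Wf Δ (.mu m ts) →
      C bu bv σ0 Δ Γ v v' (Ty.subst1 (.mu m ts) (ts ⟨j, h⟩)) →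
      C bu bv σ0 Δ Γ (.inj j v) (.inj j v') (.mu m ts)
  | tlam : ∀ {Δ Γ e e' τ}, C bu bv σ0 (Δ + 1) (Γ.map (Ty.rename Nat.succ)) e e' τ →
      C bu bv σ0 Δ Γ (.tlam e) (.tlam e') (.all τ)
  | proj : ∀ {Δ Γ v v' τ₁ τ₂} (b : Bool), IsVal v → IsVal v' →
      C bu bv σ0 Δ Γ v v' (.prod τ₁ τ₂) →
      C bu bv σ0 Δ Γ (.proj b v) (.proj b v') (bif b then τ₂ else τ₁)
  | app : ∀ {Δ Γ v v' e e' τ₁ τ₂}, IsVal v → IsVal v' →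
      C bu bv σ0 Δ Γ v v' (.arrow τ₁ τ₂) → C bu bv σ0 Δ Γ e e' τ₁ →
      C bu bv σ0 Δ Γ (.app v e) (.app v' e') τ₂
  | case : ∀ {Δ Γ v v' τ'} {m : ℕ} {ts : Fin m → Ty} {es es' : Fin m → Tm},
      IsVal v → IsVal v' → C bu bv σ0 Δ Γ v v' (.mu m ts) →
      (∀ j : Fin m, C bu bv σ0 Δ (Ty.subst1 (.mu m ts) (ts j) :: Γ) (es j) (es' j) τ') →
      C bu bv σ0 Δ Γ (.case v m es) (.case v' m es') τ'
  | tapp : ∀ {Δ Γ v v' τ σ}, IsVal v → IsVal v' → C bu bv σ0 Δ Γ v v' (.all τ) →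
      Ty.Wf Δ σ → C bu bv σ0 Δ Γ (.tapp v σ) (.tapp v' σ) (Ty.subst1 σ τ)
  | choice : ∀ {Δ Γ}, CtxWf Δ Γ → C bu bv σ0 Δ Γ .choice .choice natTy

variable {bu bv : Tm} {σ0 : Ty}

/-- Reflexivity of `C` on well-typed terms. -/
theorem C.refl {Δ Γ e τ} (h : HasTy Δ Γ e τ) : C bu bv σ0 Δ Γ e e τ := by
  induction h with
  | var hwf hx => exact .var hwf hx
  | unit hwf => exact .unit hwf
  | pair h1 h2 _ _ ih1 ih2 => exact .pair h1 h2 h1 h2 ih1 ih2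
  | lam hwτ _ ih => exact .lam hwτ ih
  | inj hj hval hwf _ ih => exact .inj hj hval hval hwf ih
  | tlam _ ih => exact .tlam ih
  | proj b hval _ ih => exact .proj b hval hval ih
  | app hval h1 _ ih1 ih2 => exact .app hval hval ih1 ih2
  | case hval _ _ ih ihs => exact .case hval hval ih ihs
  | tapp hval _ hwσ ih => exact .tapp hval hval ih hwσ
  | choice hwf => exact .choice hwf

section
variable (hbu : HasTy 1 [] bu σ0) (hbv : HasTy 1 [] bv σ0)

include hbu hbv in
/-- `C` relates only well-typed terms. -/
theorem C.wt {Δ Γ e e' τ} (h : C bu bv σ0 Δ Γ e e' τ) :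
    HasTy Δ Γ e τ ∧ HasTy Δ Γ e' τ := by
  have hU0 : HasTy 0 [] (.tlam bu) (.all σ0) := HasTy.tlam (Γ := []) hbu
  have hV0 : HasTy 0 [] (.tlam bv) (.all σ0) := HasTy.tlam (Γ := []) hbv
  have hU : ∀ {Δ' : ℕ} {Γ' : List Ty}, CtxWf Δ' Γ' → HasTy Δ' Γ' (.tlam bu) (.all σ0) :=
    fun hwf => hU0.weaken (Nat.zero_le _) (fun x κ hx => by simp at hx) hwf
  have hV : ∀ {Δ' : ℕ} {Γ' : List Ty}, CtxWf Δ' Γ' → HasTy Δ' Γ' (.tlam bv) (.all σ0) :=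
    fun hwf => hV0.weaken (Nat.zero_le _) (fun x κ hx => by simp at hx) hwf
  induction h with
  | baseUV hwf => exact ⟨hU hwf, hV hwf⟩
  | baseVU hwf => exact ⟨hV hwf, hU hwf⟩
  | var hwf hx => exact ⟨.var hwf hx, .var hwf hx⟩
  | unit hwf => exact ⟨.unit hwf, .unit hwf⟩
  | pair h1 h2 h1' h2' _ _ ih1 ih2 =>
      exact ⟨.pair h1 h2 ih1.1 ih2.1, .pair h1' h2' ih1.2 ih2.2⟩
  | lam hwτ _ ih => exact ⟨.lam hwτ ih.1, .lam hwτ ih.2⟩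
  | inj hj hval hval' hwf _ ih => exact ⟨.inj hj hval hwf ih.1, .inj hj hval' hwf ih.2⟩
  | tlam _ ih => exact ⟨.tlam ih.1, .tlam ih.2⟩
  | proj b hval hval' _ ih => exact ⟨.proj b hval ih.1, .proj b hval' ih.2⟩
  | app hval hval' _ _ ih1 ih2 => exact ⟨.app hval ih1.1 ih2.1, .app hval' ih1.2 ih2.2⟩
  | case hval hval' _ _ ih ihs =>
      exact ⟨.case hval ih.1 (fun j => (ihs j).1), .case hval' ih.2 (fun j => (ihs j).2)⟩
  | tapp hval hval' _ hwσ ih => exact ⟨.tapp hval ih.1 hwσ, .tapp hval' ih.2 hwσ⟩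
  | choice hwf => exact ⟨.choice hwf, .choice hwf⟩

end

/-- `C` preserves valuehood. -/
theorem C.val {Δ Γ e e' τ} (h : C bu bv σ0 Δ Γ e e' τ) : IsVal e ↔ IsVal e' := by
  induction h with
  | baseUV _ => exact ⟨fun _ => .tlam, fun _ => .tlam⟩
  | baseVU _ => exact ⟨fun _ => .tlam, fun _ => .tlam⟩
  | var _ _ => exact Iff.rfl
  | unit _ => exact Iff.rfl
  | pair h1 h2 h1' h2' _ _ _ _ => exact ⟨fun _ => .pair h1' h2', fun _ => .pair h1 h2⟩
  | lam _ _ _ => exact ⟨fun _ => .lam, fun _ => .lam⟩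
  | inj _ hval hval' _ _ _ => exact ⟨fun _ => .inj hval', fun _ => .inj hval⟩
  | tlam _ _ => exact ⟨fun _ => .tlam, fun _ => .tlam⟩
  | proj b _ _ _ _ => exact Iff.intro (fun h => by cases h) (fun h => by cases h)
  | app _ _ _ _ _ _ => exact Iff.intro (fun h => by cases h) (fun h => by cases h)
  | case _ _ _ _ _ _ => exact Iff.intro (fun h => by cases h) (fun h => by cases h)
  | tapp _ _ _ _ _ => exact Iff.intro (fun h => by cases h) (fun h => by cases h)
  | choice _ => exact Iff.intro (fun h => by cases h) (fun h => by cases h)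



theorem IsVal.tySubst {v : Tm} (hv : IsVal v) (δ : ℕ → Ty) : IsVal (v.tySubst δ) := by
  induction hv generalizing δ with
  | var => exact .var
  | unit => exact .unit
  | pair _ _ ih1 ih2 => exact .pair (ih1 δ) (ih2 δ)
  | lam => exact .lam
  | inj _ ih => exact .inj (ih δ)
  | tlam => exact .tlam

theorem ctx_comm_rename (f : ℕ → ℕ) (Γ : List Ty) :
    (Γ.map (Ty.rename Nat.succ)).map (Ty.rename (liftR f)) =
      (Γ.map (Ty.rename f)).map (Ty.rename Nat.succ) := by
  simp only [List.map_map]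
  exact List.map_congr_left (fun τ _ => Ty.rename_succ_rename_liftR f τ)

theorem ctx_comm_subst (δ : ℕ → Ty) (Γ : List Ty) :
    (Γ.map (Ty.rename Nat.succ)).map (Ty.subst (liftS δ)) =
      (Γ.map (Ty.subst δ)).map (Ty.rename Nat.succ) := by
  simp only [List.map_map]
  exact List.map_congr_left (fun τ _ => Ty.rename_succ_subst_liftS δ τ)

variable {bu bv : Tm} {σ0 : Ty}

section
variable (hσ : Ty.Wf 1 σ0) (hbu : HasTy 1 [] bu σ0) (hbv : HasTy 1 [] bv σ0)

include hσ hbu hbv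

/-- Renaming of term variables preserves `C`. -/
theorem C.rename {Δ Γ e e' τ} (h : C bu bv σ0 Δ Γ e e' τ) :
    ∀ {Γ' : List Ty} {f : ℕ → ℕ},
      (∀ (x : ℕ) (κ : Ty), Γ[x]? = some κ → Γ'[f x]? = some κ) → CtxWf Δ Γ' →
      C bu bv σ0 Δ Γ' (e.rename f) (e'.rename f) τ := by
  have hU0 : HasTy 0 [] (.tlam bu) (.all σ0) := HasTy.tlam (Γ := []) hbu
  have hV0 : HasTy 0 [] (.tlam bv) (.all σ0) := HasTy.tlam (Γ := []) hbv
  have hid : ∀ (t : Tm), HasTy 0 [] t (.all σ0) → ∀ f : ℕ → ℕ, t.rename f = t :=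
    fun t ht f => ht.rename_id (fun i hi => absurd hi (by simp))
  induction h with
  | baseUV hwf =>
      intro Γ' f hΓ hwf'
      rw [hid _ hU0 f, hid _ hV0 f]
      exact .baseUV hwf'
  | baseVU hwf =>
      intro Γ' f hΓ hwf'
      rw [hid _ hV0 f, hid _ hU0 f]
      exact .baseVU hwf'
  | var _ hx => intro Γ' f hΓ hwf'; exact .var hwf' (hΓ _ _ hx)
  | unit _ => intro Γ' f hΓ hwf'; exact .unit hwf'
  | pair h1 h2 h1' h2' _ _ ih1 ih2 =>
      intro Γ' f hΓ hwf'
      exact .pair (h1.rename f) (h2.rename f) (h1'.rename f) (h2'.rename f)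
        (ih1 hΓ hwf') (ih2 hΓ hwf')
  | lam hwτ _ ih =>
      intro Γ' f hΓ hwf'
      refine .lam hwτ (ih (fun x κ hx => ?_) (.cons hwτ hwf'))
      cases x with
      | zero => simpa [liftR] using hx
      | succ x => simpa [liftR] using hΓ _ _ (by simpa using hx)
  | inj hj hval hval' hwf _ ih =>
      intro Γ' f hΓ hwf'
      exact .inj hj (hval.rename f) (hval'.rename f) hwf (ih hΓ hwf')
  | tlam _ ih =>
      intro Γ' f hΓ hwf'
      refine .tlam (ih (fun x κ hx => ?_) hwf'.map_renameSucc)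
      simp only [List.getElem?_map] at hx ⊢
      rcases Option.map_eq_some_iff.1 hx with ⟨κ', hκ', rfl⟩
      rw [hΓ _ _ hκ']
      rfl
  | proj b hval hval' _ ih =>
      intro Γ' f hΓ hwf'
      exact .proj b (hval.rename f) (hval'.rename f) (ih hΓ hwf')
  | app hval hval' _ _ ih1 ih2 =>
      intro Γ' f hΓ hwf'
      exact .app (hval.rename f) (hval'.rename f) (ih1 hΓ hwf') (ih2 hΓ hwf')
  | case hval hval' hv hbr ih ihs =>
      intro Γ' f hΓ hwf'
      refine .case (hval.rename f) (hval'.rename f) (ih hΓ hwf') (fun j => ?_)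
      have hwfA : Ty.Wf _ _ := ((hbr j).wt hbu hbv).1.ctxWf _ List.mem_cons_self
      refine ihs j (fun x κ hx => ?_) (.cons hwfA hwf')
      cases x with
      | zero => simpa [liftR] using hx
      | succ x => simpa [liftR] using hΓ _ _ (by simpa using hx)
  | tapp hval hval' _ hwσ ih =>
      intro Γ' f hΓ hwf'
      exact .tapp (hval.rename f) (hval'.rename f) (ih hΓ hwf') hwσ
  | choice _ => intro Γ' f hΓ hwf'; exact .choice hwf'

/-- Renaming of type variables preserves `C`. -/
theorem C.tyRename {Δ Γ e e' τ} (h : C bu bv σ0 Δ Γ e e' τ) :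
    ∀ {Δ' : ℕ} {f : ℕ → ℕ}, (∀ i, i < Δ → f i < Δ') →
      C bu bv σ0 Δ' (Γ.map (Ty.rename f)) (e.tyRename f) (e'.tyRename f) (τ.rename f) := by
  have hU0 : HasTy 0 [] (.tlam bu) (.all σ0) := HasTy.tlam (Γ := []) hbu
  have hV0 : HasTy 0 [] (.tlam bv) (.all σ0) := HasTy.tlam (Γ := []) hbv
  have hid : ∀ (t : Tm), HasTy 0 [] t (.all σ0) → ∀ f : ℕ → ℕ, t.tyRename f = t :=
    fun t ht f => ht.tyRename_id (fun i hi => absurd hi (by omega))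
  have hallid : ∀ f : ℕ → ℕ, (Ty.all σ0).rename f = Ty.all σ0 :=
    fun f => Ty.rename_id_of_wf _ (Δ := 0) (fun i hi => absurd hi (by omega)) hσ
  induction h with
  | baseUV hwf =>
      intro Δ' f hf
      rw [show (Tm.tlam bu).tyRename f = Tm.tlam bu from hid _ hU0 f,
        show (Tm.tlam bv).tyRename f = Tm.tlam bv from hid _ hV0 f, hallid f]
      exact .baseUV (hwf.map_rename hf)
  | baseVU hwf =>
      intro Δ' f hf
      rw [show (Tm.tlam bv).tyRename f = Tm.tlam bv from hid _ hV0 f,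
        show (Tm.tlam bu).tyRename f = Tm.tlam bu from hid _ hU0 f, hallid f]
      exact .baseVU (hwf.map_rename hf)
  | var hwf hx =>
      intro Δ' f hf
      refine .var (hwf.map_rename hf) ?_
      simp only [List.getElem?_map, hx, Option.map_some]
  | unit hwf => intro Δ' f hf; exact .unit (hwf.map_rename hf)
  | pair h1 h2 h1' h2' _ _ ih1 ih2 =>
      intro Δ' f hf
      exact .pair (h1.tyRename f) (h2.tyRename f) (h1'.tyRename f) (h2'.tyRename f)
        (ih1 hf) (ih2 hf)
  | lam hwτ _ ih =>
      intro Δ' f hf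
      exact .lam (Ty.wf_rename _ hf hwτ) (ih hf)
  | @inj _ _ _ _ m ts j hj hval hval' hwf _ ih =>
      intro Δ' f hf
      have hty : (Ty.subst1 (.mu m ts) (ts ⟨j, hj⟩)).rename f =
          Ty.subst1 ((Ty.mu m ts).rename f) ((ts ⟨j, hj⟩).rename (liftR f)) :=
        Ty.subst1_rename _ _ _
      refine C.inj (ts := fun j => (ts j).rename (liftR f)) hj (hval.tyRename f)
        (hval'.tyRename f) (Ty.wf_rename _ hf hwf) ?_
      have h2 := ih hf
      rw [hty] at h2
      exact h2
  | tlam _ ih =>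
      intro Δ' f hf
      refine .tlam ?_
      have := ih (Δ' := Δ' + 1) (f := liftR f) (fun i hi => by
        cases i with
        | zero => exact Nat.succ_pos _
        | succ i => exact Nat.succ_lt_succ (hf i (Nat.lt_of_succ_lt_succ hi)))
      rwa [ctx_comm_rename] at this
  | proj b hval hval' _ ih =>
      intro Δ' f hf
      have := C.proj b (hval.tyRename f) (hval'.tyRename f) (ih hf)
      cases b
      · simpa [Tm.tyRename] using this
      · simpa [Tm.tyRename] using this
  | app hval hval' _ _ ih1 ih2 =>
      intro Δ' f hf
      exact .app (hval.tyRename f) (hval'.tyRename f) (ih1 hf) (ih2 hf)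
  | @case _ _ _ _ τ' m ts es es' hval hval' hv hbr ih ihs =>
      intro Δ' f hf
      refine C.case (ts := fun j => (ts j).rename (liftR f)) (hval.tyRename f)
        (hval'.tyRename f) (ih hf) (fun j => ?_)
      have hty : (Ty.subst1 (.mu m ts) (ts j)).rename f =
          Ty.subst1 ((Ty.mu m ts).rename f) ((ts j).rename (liftR f)) :=
        Ty.subst1_rename _ _ _
      have := ihs j hf
      rw [List.map_cons, hty] at this
      exact this
  | @tapp _ _ _ _ τ0 σ' hval hval' _ hwσ ih =>
      intro Δ' f hf
      have := C.tapp (hval.tyRename f) (hval'.tyRename f) (ih hf) (Ty.wf_rename σ' hf hwσ)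
      rwa [← Ty.subst1_rename] at this
  | choice hwf =>
      intro Δ' f hf
      have : natTy.rename f = natTy :=
        Ty.rename_id_of_wf _ (Δ := 0) (fun i hi => absurd hi (by omega)) (natTy_wf 0)
      rw [show (Tm.choice).tyRename f = Tm.choice from rfl]
      rw [this]
      exact .choice (hwf.map_rename hf)

end



variable {bu bv : Tm} {σ0 : Ty}

section
variable (hσ : Ty.Wf 1 σ0) (hbu : HasTy 1 [] bu σ0) (hbv : HasTy 1 [] bv σ0)

include hσ hbu hbv

/-- Substitution of related values for term variables preserves `C`. -/
theorem C.substC {Δ Γ e e' τ} (h : C bu bv σ0 Δ Γ e e' τ) :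
    ∀ {Γ' : List Ty} {γ γ' : ℕ → Tm},
      (∀ i, IsVal (γ i)) → (∀ i, IsVal (γ' i)) →
      (∀ (i : ℕ) (κ : Ty), Γ[i]? = some κ → C bu bv σ0 Δ Γ' (γ i) (γ' i) κ) →
      CtxWf Δ Γ' →
      C bu bv σ0 Δ Γ' (e.subst γ) (e'.subst γ') τ := by
  have hU0 : HasTy 0 [] (.tlam bu) (.all σ0) := HasTy.tlam (Γ := []) hbu
  have hV0 : HasTy 0 [] (.tlam bv) (.all σ0) := HasTy.tlam (Γ := []) hbv
  have hid : ∀ (t : Tm), HasTy 0 [] t (.all σ0) → ∀ γ : ℕ → Tm, t.subst γ = t :=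
    fun t ht γ => ht.subst_id (fun i hi => absurd hi (by simp))
  induction h with
  | baseUV hwf =>
      intro Γ' γ γ' hγ hγ' hrel hwf'
      rw [hid _ hU0 γ, hid _ hV0 γ']
      exact .baseUV hwf'
  | baseVU hwf =>
      intro Γ' γ γ' hγ hγ' hrel hwf'
      rw [hid _ hV0 γ, hid _ hU0 γ']
      exact .baseVU hwf'
  | var _ hx => intro Γ' γ γ' hγ hγ' hrel hwf'; exact hrel _ _ hx
  | unit _ => intro Γ' γ γ' hγ hγ' hrel hwf'; exact .unit hwf'
  | pair h1 h2 h1' h2' _ _ ih1 ih2 =>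
      intro Γ' γ γ' hγ hγ' hrel hwf'
      exact .pair (h1.subst γ hγ) (h2.subst γ hγ) (h1'.subst γ' hγ') (h2'.subst γ' hγ')
        (ih1 hγ hγ' hrel hwf') (ih2 hγ hγ' hrel hwf')
  | @lam _ _ _ _ τ₁ τ₂ hwτ _ ih =>
      intro Γ' γ γ' hγ hγ' hrel hwf'
      refine .lam hwτ (ih (liftT_isVal hγ) (liftT_isVal hγ') (fun i κ hx => ?_)
        (.cons hwτ hwf'))
      cases i with
      | zero =>
          have : τ₁ = κ := by simpa using hx
          subst this
          exact .var (.cons hwτ hwf') (by simp [liftT])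
      | succ i =>
          simp only [liftT]
          exact (hrel _ _ (by simpa using hx)).rename hσ hbu hbv
            (fun x κ' hx' => by simpa using hx') (.cons hwτ hwf')
  | inj hj hval hval' hwf _ ih =>
      intro Γ' γ γ' hγ hγ' hrel hwf'
      exact .inj hj (hval.subst γ hγ) (hval'.subst γ' hγ') hwf (ih hγ hγ' hrel hwf')
  | tlam _ ih =>
      intro Γ' γ γ' hγ hγ' hrel hwf'
      refine .tlam (ih (tyRenamed_isVal hγ _) (tyRenamed_isVal hγ' _) (fun i κ hx => ?_)
        hwf'.map_renameSucc)
      simp only [List.getElem?_map] at hx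
      rcases Option.map_eq_some_iff.1 hx with ⟨κ', hκ', rfl⟩
      exact (hrel _ _ hκ').tyRename hσ hbu hbv (fun i hi => Nat.succ_lt_succ hi)
  | proj b hval hval' _ ih =>
      intro Γ' γ γ' hγ hγ' hrel hwf'
      exact .proj b (hval.subst γ hγ) (hval'.subst γ' hγ') (ih hγ hγ' hrel hwf')
  | app hval hval' _ _ ih1 ih2 =>
      intro Γ' γ γ' hγ hγ' hrel hwf'
      exact .app (hval.subst γ hγ) (hval'.subst γ' hγ') (ih1 hγ hγ' hrel hwf')
        (ih2 hγ hγ' hrel hwf')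
  | @case _ _ _ _ τ' m ts es es' hval hval' hv hbr ih ihs =>
      intro Γ' γ γ' hγ hγ' hrel hwf'
      refine .case (hval.subst γ hγ) (hval'.subst γ' hγ') (ih hγ hγ' hrel hwf')
        (fun j => ?_)
      have hwfA := ((hbr j).wt hbu hbv).1.ctxWf _ List.mem_cons_self
      refine ihs j (liftT_isVal hγ) (liftT_isVal hγ') (fun i κ hx => ?_) (.cons hwfA hwf')
      cases i with
      | zero =>
          have : Ty.subst1 (.mu m ts) (ts j) = κ := by simpa using hx
          subst this
          exact .var (.cons hwfA hwf') (by simp [liftT])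
      | succ i =>
          simp only [liftT]
          exact (hrel _ _ (by simpa using hx)).rename hσ hbu hbv
            (fun x κ' hx' => by simpa using hx') (.cons hwfA hwf')
  | tapp hval hval' _ hwσ ih =>
      intro Γ' γ γ' hγ hγ' hrel hwf'
      exact .tapp (hval.subst γ hγ) (hval'.subst γ' hγ') (ih hγ hγ' hrel hwf') hwσ
  | choice _ => intro Γ' γ γ' hγ hγ' hrel hwf'; exact .choice hwf'

/-- Substitution of well-formed types for type variables preserves `C`. -/
theorem C.tySubstC {Δ Γ e e' τ} (h : C bu bv σ0 Δ Γ e e' τ) :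
    ∀ {Δ' : ℕ} {δ : ℕ → Ty}, (∀ i, i < Δ → (δ i).Wf Δ') →
      C bu bv σ0 Δ' (Γ.map (Ty.subst δ)) (e.tySubst δ) (e'.tySubst δ) (τ.subst δ) := by
  have hU0 : HasTy 0 [] (.tlam bu) (.all σ0) := HasTy.tlam (Γ := []) hbu
  have hV0 : HasTy 0 [] (.tlam bv) (.all σ0) := HasTy.tlam (Γ := []) hbv
  have hid : ∀ (t : Tm), HasTy 0 [] t (.all σ0) → ∀ δ : ℕ → Ty, t.tySubst δ = t :=
    fun t ht δ => ht.tySubst_id (fun i hi => absurd hi (by omega))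
  have hallid : ∀ δ : ℕ → Ty, (Ty.all σ0).subst δ = Ty.all σ0 :=
    fun δ => Ty.subst_id_of_wf _ (Δ := 0) (fun i hi => absurd hi (by omega)) hσ
  induction h with
  | baseUV hwf =>
      intro Δ' δ hδ
      rw [show (Tm.tlam bu).tySubst δ = Tm.tlam bu from hid _ hU0 δ,
        show (Tm.tlam bv).tySubst δ = Tm.tlam bv from hid _ hV0 δ, hallid δ]
      exact .baseUV (hwf.map_subst hδ)
  | baseVU hwf =>
      intro Δ' δ hδ
      rw [show (Tm.tlam bv).tySubst δ = Tm.tlam bv from hid _ hV0 δ,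
        show (Tm.tlam bu).tySubst δ = Tm.tlam bu from hid _ hU0 δ, hallid δ]
      exact .baseVU (hwf.map_subst hδ)
  | var hwf hx =>
      intro Δ' δ hδ
      refine .var (hwf.map_subst hδ) ?_
      simp only [List.getElem?_map, hx, Option.map_some]
  | unit hwf => intro Δ' δ hδ; exact .unit (hwf.map_subst hδ)
  | pair h1 h2 h1' h2' _ _ ih1 ih2 =>
      intro Δ' δ hδ
      exact .pair (h1.tySubst δ) (h2.tySubst δ) (h1'.tySubst δ) (h2'.tySubst δ)
        (ih1 hδ) (ih2 hδ)
  | lam hwτ _ ih =>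
      intro Δ' δ hδ
      exact .lam (Ty.wf_subst _ hδ hwτ) (ih hδ)
  | @inj _ _ _ _ m ts j hj hval hval' hwf _ ih =>
      intro Δ' δ hδ
      have hty : (Ty.subst1 (.mu m ts) (ts ⟨j, hj⟩)).subst δ =
          Ty.subst1 ((Ty.mu m ts).subst δ) ((ts ⟨j, hj⟩).subst (liftS δ)) :=
        Ty.subst1_subst _ _ _
      refine C.inj (ts := fun j => (ts j).subst (liftS δ)) hj (hval.tySubst δ)
        (hval'.tySubst δ) (Ty.wf_subst _ hδ hwf) ?_
      have h2 := ih hδ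
      rw [hty] at h2
      exact h2
  | tlam _ ih =>
      intro Δ' δ hδ
      refine .tlam ?_
      have := ih (Δ' := Δ' + 1) (δ := liftS δ) (fun i hi => by
        cases i with
        | zero => exact Nat.succ_pos _
        | succ i =>
            simp only [liftS]
            exact Ty.wf_rename _ (fun k hk => Nat.succ_lt_succ hk)
              (hδ i (Nat.lt_of_succ_lt_succ hi)))
      rwa [ctx_comm_subst] at this
  | proj b hval hval' _ ih =>
      intro Δ' δ hδ
      have := C.proj b (hval.tySubst δ) (hval'.tySubst δ) (ih hδ)
      cases b
      · simpa [Tm.tySubst] using this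
      · simpa [Tm.tySubst] using this
  | app hval hval' _ _ ih1 ih2 =>
      intro Δ' δ hδ
      exact .app (hval.tySubst δ) (hval'.tySubst δ) (ih1 hδ) (ih2 hδ)
  | @case _ _ _ _ τ' m ts es es' hval hval' hv hbr ih ihs =>
      intro Δ' δ hδ
      refine C.case (ts := fun j => (ts j).subst (liftS δ)) (hval.tySubst δ)
        (hval'.tySubst δ) (ih hδ) (fun j => ?_)
      have hty : (Ty.subst1 (.mu m ts) (ts j)).subst δ =
          Ty.subst1 ((Ty.mu m ts).subst δ) ((ts j).subst (liftS δ)) :=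
        Ty.subst1_subst _ _ _
      have := ihs j hδ
      rw [List.map_cons, hty] at this
      exact this
  | @tapp _ _ _ _ τ0 σ' hval hval' _ hwσ ih =>
      intro Δ' δ hδ
      have := C.tapp (hval.tySubst δ) (hval'.tySubst δ) (ih hδ) (Ty.wf_subst σ' hδ hwσ)
      rwa [← Ty.subst1_subst] at this
  | choice hwf =>
      intro Δ' δ hδ
      rw [show (Tm.choice).tySubst δ = Tm.choice from rfl, natTy_subst δ]
      exact .choice (hwf.map_subst hδ)

end



variable {bu bv : Tm} {σ0 : Ty}

/-! ### Inversion lemmas for `C` -/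

theorem C.app_inv {Δ Γ f a w τ} (h : C bu bv σ0 Δ Γ (.app f a) w τ) :
    ∃ f' a' τ₁, w = .app f' a' ∧ IsVal f ∧ IsVal f' ∧
      C bu bv σ0 Δ Γ f f' (.arrow τ₁ τ) ∧ C bu bv σ0 Δ Γ a a' τ₁ := by
  cases h with
  | app hval hval' h1 h2 => exact ⟨_, _, _, rfl, hval, hval', h1, h2⟩

theorem C.lam_inv {Δ Γ c w τ₁ τ₂} (h : C bu bv σ0 Δ Γ (.lam c) w (.arrow τ₁ τ₂)) :
    ∃ c', w = .lam c' ∧ C bu bv σ0 Δ (τ₁ :: Γ) c c' τ₂ := by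
  cases h with
  | lam hwτ h1 => exact ⟨_, rfl, h1⟩

theorem C.pair_inv {Δ Γ w₁ w₂ w τ₁ τ₂} (h : C bu bv σ0 Δ Γ (.pair w₁ w₂) w (.prod τ₁ τ₂)) :
    ∃ w₁' w₂', w = .pair w₁' w₂' ∧ IsVal w₁' ∧ IsVal w₂' ∧
      C bu bv σ0 Δ Γ w₁ w₁' τ₁ ∧ C bu bv σ0 Δ Γ w₂ w₂' τ₂ := by
  cases h with
  | pair h1 h2 h1' h2' hc1 hc2 => exact ⟨_, _, rfl, h1', h2', hc1, hc2⟩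

theorem C.inj_inv {Δ Γ j w₀ w m} {ts : Fin m → Ty}
    (h : C bu bv σ0 Δ Γ (.inj j w₀) w (.mu m ts)) :
    ∃ w₀', w = .inj j w₀' ∧ IsVal w₀ ∧ IsVal w₀' ∧
      ∀ hj : j < m, C bu bv σ0 Δ Γ w₀ w₀' (Ty.subst1 (.mu m ts) (ts ⟨j, hj⟩)) := by
  cases h with
  | inj hj hval hval' hwf hc => exact ⟨_, rfl, hval, hval', fun _ => hc⟩

theorem C.tlam_inv {Δ Γ c w τ₀} (h : C bu bv σ0 Δ Γ (.tlam c) w (.all τ₀)) :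
    (∃ c', w = .tlam c' ∧ C bu bv σ0 (Δ + 1) (Γ.map (Ty.rename Nat.succ)) c c' τ₀) ∨
    (c = bu ∧ w = .tlam bv ∧ τ₀ = σ0) ∨ (c = bv ∧ w = .tlam bu ∧ τ₀ = σ0) := by
  cases h with
  | baseUV _ => exact Or.inr (Or.inl ⟨rfl, rfl, rfl⟩)
  | baseVU _ => exact Or.inr (Or.inr ⟨rfl, rfl, rfl⟩)
  | tlam h1 => exact Or.inl ⟨_, rfl, h1⟩

theorem C.case_inv {Δ Γ w m es z τ} (h : C bu bv σ0 Δ Γ (.case w m es) z τ) :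
    ∃ w' es' ts, z = .case w' m es' ∧ IsVal w ∧ IsVal w' ∧
      C bu bv σ0 Δ Γ w w' (.mu m ts) ∧
      ∀ j : Fin m, C bu bv σ0 Δ (Ty.subst1 (.mu m ts) (ts j) :: Γ) (es j) (es' j) τ := by
  cases h with
  | case hval hval' hc hbr => exact ⟨_, _, _, rfl, hval, hval', hc, hbr⟩

theorem C.tapp_inv {Δ Γ w σ' z τ} (h : C bu bv σ0 Δ Γ (.tapp w σ') z τ) :
    ∃ w' τ₀, z = .tapp w' σ' ∧ IsVal w ∧ IsVal w' ∧
      C bu bv σ0 Δ Γ w w' (.all τ₀) ∧ Ty.Wf Δ σ' ∧ τ = Ty.subst1 σ' τ₀ := by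
  cases h with
  | tapp hval hval' hc hwσ => exact ⟨_, _, rfl, hval, hval', hc, hwσ, rfl⟩

theorem C.proj_inv {Δ Γ b w z τ} (h : C bu bv σ0 Δ Γ (.proj b w) z τ) :
    ∃ w' τ₁ τ₂, z = .proj b w' ∧ IsVal w ∧ IsVal w' ∧
      C bu bv σ0 Δ Γ w w' (.prod τ₁ τ₂) ∧ τ = (bif b then τ₂ else τ₁) := by
  cases h with
  | proj b hval hval' hc => exact ⟨_, _, _, rfl, hval, hval', hc, rfl⟩

theorem C.choice_inv {Δ Γ z τ} (h : C bu bv σ0 Δ Γ .choice z τ) :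
    z = .choice ∧ τ = natTy := by
  cases h with
  | choice _ => exact ⟨rfl, rfl⟩

/-! ### Operational lemmas -/

theorem IsVal.no_step {w e : Tm} {l : Lbl} (hw : IsVal w) (hs : Step w l e) : False := by
  cases hs <;> cases hw

theorem step_plug {E : List Tm} (hE : ∀ f ∈ E, IsVal f) {x y : Tm} {l : Lbl}
    (hs : Step x l y) : Step (plug E x) l (plug E y) := by
  induction E with
  | nil => exact hs
  | cons f E ih =>
      exact Step.appArg (hE f List.mem_cons_self)
        (ih (fun g hg => hE g (List.mem_cons_of_mem _ hg)))

theorem plug_not_val {E : List Tm} {x : Tm} (hx : ¬ IsVal x) : ¬ IsVal (plug E x) := by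
  induction E with
  | nil => exact hx
  | cons f E ih => exact fun h => by cases h

theorem plug_step_inv {E : List Tm} (hE : ∀ f ∈ E, IsVal f) {x z : Tm} {l : Lbl}
    (hx : ¬ IsVal x) (hs : Step (plug E x) l z) :
    ∃ y, Step x l y ∧ z = plug E y := by
  induction E generalizing z with
  | nil => exact ⟨z, hs, rfl⟩
  | cons f E ih =>
      cases hs with
      | beta hval => exact absurd hval (plug_not_val hx)
      | appArg hval hs' =>
          rcases ih (fun g hg => hE g (List.mem_cons_of_mem _ hg)) hs' with ⟨y, hy, rfl⟩
          exact ⟨y, hy, rfl⟩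

/-- Plain multi-step reduction with step count. -/
inductive RedN : Tm → ℕ → Tm → Prop where
  | refl : ∀ {e}, RedN e 0 e
  | step : ∀ {e l e₁ n e₂}, Step e l e₁ → RedN e₁ n e₂ → RedN e (n + 1) e₂

theorem stepsU_snoc {e l e₁ n e₂} (hs : Step e l e₁) (h : StepsU e₁ n e₂) :
    ∃ n', StepsU e n' e₂ := by
  cases l with
  | unfold => exact ⟨n + 1, .unfold hs h⟩
  | beta => exact ⟨n, .other (by rintro ⟨⟩) hs h⟩
  | projred => exact ⟨n, .other (by rintro ⟨⟩) hs h⟩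
  | tbeta => exact ⟨n, .other (by rintro ⟨⟩) hs h⟩
  | choice => exact ⟨n, .other (by rintro ⟨⟩) hs h⟩

theorem mayConv_of_val {v : Tm} (hv : IsVal v) : MayConv v := ⟨0, v, .refl, hv⟩

theorem mayConv_head {e l e₁ : Tm → Tm → Prop} : True := trivial

theorem MayConv.head {e e₁ : Tm} {l : Lbl} (hs : Step e l e₁) (h : MayConv e₁) : MayConv e := by
  rcases h with ⟨n, w, hsu, hw⟩
  rcases stepsU_snoc hs hsu with ⟨n', hsu'⟩
  exact ⟨n', w, hsu', hw⟩

theorem redN_of_stepsU {e n e'} (h : StepsU e n e') : ∃ k, RedN e k e' := by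
  induction h with
  | refl => exact ⟨0, .refl⟩
  | unfold hs _ ih => rcases ih with ⟨k, hk⟩; exact ⟨k + 1, .step hs hk⟩
  | other _ hs _ ih => rcases ih with ⟨k, hk⟩; exact ⟨k + 1, .step hs hk⟩

theorem mayConv_iff_redN {e : Tm} : MayConv e ↔ ∃ k w, RedN e k w ∧ IsVal w := by
  constructor
  · rintro ⟨n, w, hsu, hw⟩
    rcases redN_of_stepsU hsu with ⟨k, hk⟩
    exact ⟨k, w, hk, hw⟩
  · rintro ⟨k, w, hk, hw⟩
    induction hk with
    | refl => exact mayConv_of_val hw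
    | step hs _ ih => exact (ih hw).head hs

/-- If the only possible step of `x` (not a value) is to `x₀`, then convergence of
`E[x]` gives convergence of `E[x₀]`. -/
theorem mayConv_unique_step {E : List Tm} (hE : ∀ f ∈ E, IsVal f) {x x₀ : Tm}
    (hx : ¬ IsVal x) (huniq : ∀ l y, Step x l y → y = x₀)
    (h : MayConv (plug E x)) : MayConv (plug E x₀) := by
  rcases h with ⟨n, w, hsu, hw⟩
  cases hsu with
  | refl => exact absurd hw (plug_not_val hx)
  | unfold hs rest =>
      rcases plug_step_inv hE hx hs with ⟨y, hy, rfl⟩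
      rw [huniq _ _ hy] at rest
      exact ⟨_, w, rest, hw⟩
  | other _ hs rest =>
      rcases plug_step_inv hE hx hs with ⟨y, hy, rfl⟩
      rw [huniq _ _ hy] at rest
      exact ⟨_, w, rest, hw⟩



/-- `C`-related evaluation contexts with interface types. -/
inductive CE (bu bv : Tm) (σ0 : Ty) : List Tm → List Tm → Ty → Ty → Prop where
  | nil : ∀ {κ}, CE bu bv σ0 [] [] κ κ
  | cons : ∀ {f f' E E' κ₀ κ₁ κ₂}, IsVal f → IsVal f' →
      C bu bv σ0 0 [] f f' (.arrow κ₁ κ₂) → CE bu bv σ0 E E' κ₀ κ₁ →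
      CE bu bv σ0 (f :: E) (f' :: E') κ₀ κ₂

variable {bu bv : Tm} {σ0 : Ty}

theorem CE.vals_left {E E' κ τ} (h : CE bu bv σ0 E E' κ τ) : ∀ f ∈ E, IsVal f := by
  induction h with
  | nil => intro f hf; cases hf
  | cons hv hv' _ _ ih =>
      intro f hf
      rcases List.mem_cons.1 hf with rfl | hf
      · assumption
      · exact ih f hf

theorem CE.vals_right {E E' κ τ} (h : CE bu bv σ0 E E' κ τ) : ∀ f ∈ E', IsVal f := by
  induction h with
  | nil => intro f hf; cases hf
  | cons hv hv' _ _ ih =>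
      intro f hf
      rcases List.mem_cons.1 hf with rfl | hf
      · assumption
      · exact ih f hf

theorem CE.liftC {E E' κ τ} (h : CE bu bv σ0 E E' κ τ) {x y : Tm}
    (hxy : C bu bv σ0 0 [] x y κ) : C bu bv σ0 0 [] (plug E x) (plug E' y) τ := by
  induction h with
  | nil => exact hxy
  | cons hv hv' hC _ ih => exact .app hv hv' hC (ih hxy)

section
variable (hσ : Ty.Wf 1 σ0) (hbu : HasTy 1 [] bu σ0) (hbv : HasTy 1 [] bv σ0)

include hσ hbu hbv in
theorem CE.liftQ {E E' κ τ} (h : CE bu bv σ0 E E' κ τ) (Q : TIRel)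
    (hComp : Compatible Q) (hRefl : ReflRel Q) {x y : Tm}
    (hxy : Q 0 [] x y κ) : Q 0 [] (plug E' x) (plug E' y) τ := by
  induction h with
  | nil => exact hxy
  | cons hv hv' hC _ ih =>
      exact hComp.app hv' hv' (hRefl _ _ _ _ ((hC.wt hbu hbv).2)) (ih hxy)

include hσ hbu hbv in
theorem C.sim {e e₁ : Tm} {l : Lbl} (hs : Step e l e₁) :
    ∀ {e' : Tm} {τ : Ty}, C bu bv σ0 0 [] e e' τ →
    (∃ e₁', Step e' l e₁' ∧ C bu bv σ0 0 [] e₁ e₁' τ) ∨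
    (∃ E E' τ' a b ba,
      ((a = Tm.tlam bu ∧ b = Tm.tlam bv ∧ ba = bu) ∨
       (a = Tm.tlam bv ∧ b = Tm.tlam bu ∧ ba = bv)) ∧
      e = plug E (.tapp a τ') ∧ e' = plug E' (.tapp b τ') ∧ Ty.Wf 0 τ' ∧
      CE bu bv σ0 E E' (Ty.subst1 τ' σ0) τ) := by
  induction hs with
  | @projFst v₁ v₂ hv1 hv2 =>
      intro e' τ h
      rcases h.proj_inv with ⟨w', τ₁, τ₂, rfl, _, _, hC, rfl⟩
      rcases hC.pair_inv with ⟨w₁', w₂', rfl, hw1', hw2', hC1, hC2⟩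
      exact Or.inl ⟨w₁', .projFst hw1' hw2', hC1⟩
  | @projSnd v₁ v₂ hv1 hv2 =>
      intro e' τ h
      rcases h.proj_inv with ⟨w', τ₁, τ₂, rfl, _, _, hC, rfl⟩
      rcases hC.pair_inv with ⟨w₁', w₂', rfl, hw1', hw2', hC1, hC2⟩
      exact Or.inl ⟨w₂', .projSnd hw1' hw2', hC2⟩
  | @beta c a hva =>
      intro e' τ h
      rcases h.app_inv with ⟨f', a', τ₁, rfl, _, _, hCf, hCa⟩
      rcases hCf.lam_inv with ⟨c', rfl, hCc⟩
      have hva' : IsVal a' := hCa.val.1 hva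
      refine Or.inl ⟨subst1 a' c', .beta hva', ?_⟩
      refine hCc.substC hσ hbu hbv (fun i => by cases i <;> [exact hva; exact .var])
        (fun i => by cases i <;> [exact hva'; exact .var]) (fun i κ hx => ?_) CtxWf.nil
      cases i with
      | zero =>
          have : τ₁ = κ := by simpa using hx
          subst this
          exact hCa
      | succ i => simp at hx
  | @tbeta c τ'' =>
      intro e' τ h
      rcases h.tapp_inv with ⟨w', τ₀, rfl, _, _, hCw, hwσ', rfl⟩
      rcases hCw.tlam_inv with ⟨c', rfl, hCc⟩ | ⟨rfl, rfl, rfl⟩ | ⟨rfl, rfl, rfl⟩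
      · refine Or.inl ⟨tySubst1 τ'' c', .tbeta, ?_⟩
        have := hCc.tySubstC hσ hbu hbv (Δ' := 0) (δ := consTy τ'' Ty.var)
          (fun i hi => by
            cases i with
            | zero => exact hwσ'
            | succ i => omega)
        simpa [tySubst1, Ty.subst1] using this
      · exact Or.inr ⟨[], [], τ'', _, _, _, Or.inl ⟨rfl, rfl, rfl⟩, rfl, rfl, hwσ', CE.nil⟩
      · exact Or.inr ⟨[], [], τ'', _, _, _, Or.inr ⟨rfl, rfl, rfl⟩, rfl, rfl, hwσ', CE.nil⟩
  | @caseInj m es j w₀ hj hvw =>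
      intro e' τ h
      rcases h.case_inv with ⟨w', es', ts, rfl, _, _, hCw, hbr⟩
      rcases hCw.inj_inv with ⟨w₀', rfl, _, hvw', hC0⟩
      refine Or.inl ⟨subst1 w₀' (es' ⟨j, hj⟩), .caseInj hj hvw', ?_⟩
      refine (hbr ⟨j, hj⟩).substC hσ hbu hbv
        (fun i => by cases i <;> [exact hvw; exact .var])
        (fun i => by cases i <;> [exact hvw'; exact .var]) (fun i κ hx => ?_) CtxWf.nil
      cases i with
      | zero =>
          have : Ty.subst1 (.mu m ts) (ts ⟨j, hj⟩) = κ := by simpa using hx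
          subst this
          exact hC0 hj
      | succ i => simp at hx
  | @choice n =>
      intro e' τ h
      rcases h.choice_inv with ⟨rfl, rfl⟩
      exact Or.inl ⟨numeral n, .choice n, C.refl (numeral_hasTy CtxWf.nil n)⟩
  | @appArg f a l a₁ hvf hsa ih =>
      intro e' τ h
      rcases h.app_inv with ⟨f', a', τ₁, rfl, _, hvf', hCf, hCa⟩
      rcases ih hCa with ⟨a₁', hs', hC'⟩ | ⟨E, E', τ', aa, bb, ba, hab, rfl, rfl, hwτ', hCE⟩
      · exact Or.inl ⟨.app f' a₁', .appArg hvf' hs', .app hvf hvf' hCf hC'⟩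
      · exact Or.inr ⟨f :: E, f' :: E', τ', aa, bb, ba, hab, rfl, rfl, hwτ',
          CE.cons hvf hvf' hCf hCE⟩

end



variable {bu bv : Tm} {σ0 : Ty}

section
variable (hσ : Ty.Wf 1 σ0) (hbu : HasTy 1 [] bu σ0) (hbv : HasTy 1 [] bv σ0)
variable (hext : ∀ τ, Ty.Wf 0 τ →
  CtxMayEq 0 [] (letTapp (.tlam bu) τ) (letTapp (.tlam bv) τ) (Ty.subst1 τ σ0))

include hσ hbu hbv hext in
/-- Core adequacy lemma for `C`. -/
theorem C.adequate : ∀ (k : ℕ) (e e' w : Tm) (τ : Ty),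
    C bu bv σ0 0 [] e e' τ → RedN e k w → IsVal w → MayConv e' := by
  intro k
  induction k with
  | zero =>
      intro e e' w τ hC hred hw
      cases hred
      exact mayConv_of_val (hC.val.1 hw)
  | succ k ih =>
      intro e e' w τ hC hred hw
      cases hred with
      | step hs hred' =>
        rcases hC.sim hσ hbu hbv hs with ⟨e₁', hs', hC'⟩ |
            ⟨E, E', τ', a, b, ba, hab, rfl, rfl, hwτ', hCE⟩
        · exact (ih _ _ w τ hC' hred' hw).head hs'
        · -- the u/v type-application case
          have ha : a = Tm.tlam ba := by
            rcases hab with ⟨rfl, rfl, rfl⟩ | ⟨rfl, rfl, rfl⟩ <;> rfl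
          have hba : HasTy 1 [] ba σ0 := by
            rcases hab with ⟨rfl, rfl, rfl⟩ | ⟨rfl, rfl, rfl⟩ <;> assumption
          subst ha
          -- identify the step taken by `e`
          have hEv := hCE.vals_left
          have hE'v := hCE.vals_right
          have hnotval : ¬ IsVal (Tm.tapp (.tlam ba) τ') := fun h => by cases h
          rcases plug_step_inv hEv hnotval hs with ⟨y, hy, rfl⟩
          have hy' : y = tySubst1 τ' ba := by cases hy; rfl
          subst hy'
          -- relate the reduct on both sides
          have hbody : C bu bv σ0 0 [] (tySubst1 τ' ba) (tySubst1 τ' ba)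
              (Ty.subst1 τ' σ0) := by
            have := (C.refl (bu := bu) (bv := bv) (σ0 := σ0) hba).tySubstC hσ hbu hbv
              (Δ' := 0) (δ := consTy τ' Ty.var)
              (fun i hi => by
                cases i with
                | zero => exact hwτ'
                | succ i => omega)
            simpa [tySubst1, Ty.subst1] using this
          have hmid := ih _ _ w τ (hCE.liftC hbody) hred' hw
          -- `E'[(Λ.ba) τ'] ↦ E'[ba[τ']]`, so `E'[(Λ.ba) τ']` may-converges
          have h1 : MayConv (plug E' (.tapp (.tlam ba) τ')) :=
            hmid.head (step_plug hE'v Step.tbeta)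
          -- `E'[let f = Λ.ba in f τ'] ↦ E'[(Λ.ba) τ']`
          have h2 : MayConv (plug E' (letTapp (.tlam ba) τ')) :=
            h1.head (step_plug hE'v (Step.beta (e := .tapp (.var 0) τ') IsVal.tlam))
          -- use the hypothesis `u τ' ≅ v τ'`
          have hQ : CtxMay 0 [] (letTapp (.tlam ba) τ') (letTapp b τ') (Ty.subst1 τ' σ0) := by
            rcases hab with ⟨ha', rfl, rfl⟩ | ⟨ha', rfl, rfl⟩
            · exact (hext τ' hwτ').1
            · exact (hext τ' hwτ').2
          rcases hQ with ⟨Q, hWT, hRefl, hTrans, hComp, hAdq, hQrel⟩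
          have hlift := hCE.liftQ hσ hbu hbv Q hComp hRefl hQrel
          have h3 : MayConv (plug E' (letTapp b τ')) := hAdq _ _ _ hlift h2
          -- finally, `E'[let f = b in f τ'] ↦ E'[b τ']` deterministically
          have hbval : IsVal b := by
            rcases hab with ⟨_, rfl, _⟩ | ⟨_, rfl, _⟩ <;> exact .tlam
          refine mayConv_unique_step hE'v (x := letTapp b τ') (fun h => by cases h)
            (fun l y hy => ?_) h3
          cases hy with
          | beta _ => rfl
          | appArg _ hs'' => exact absurd hs'' (fun h => hbval.no_step h)

end



variable {bu bv : Tm} {σ0 : Ty}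

/-- The candidate relation: a typed reflexive-transitive chain of `C`-links. -/
def RC (bu bv : Tm) (σ0 : Ty) : TIRel := fun Δ Γ e e' τ =>
  HasTy Δ Γ e τ ∧ HasTy Δ Γ e' τ ∧
    Relation.ReflTransGen (fun a b => C bu bv σ0 Δ Γ a b τ) e e'

theorem rtg_lift_val {Δ Γ κ Δ' Γ' κ'} {F : Tm → Tm}
    (h : ∀ a b, C bu bv σ0 Δ Γ a b κ → IsVal a → IsVal b → C bu bv σ0 Δ' Γ' (F a) (F b) κ')
    {a b : Tm} (hch : Relation.ReflTransGen (fun a b => C bu bv σ0 Δ Γ a b κ) a b)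
    (hv : IsVal a) :
    Relation.ReflTransGen (fun a b => C bu bv σ0 Δ' Γ' a b κ') (F a) (F b) := by
  induction hch using Relation.ReflTransGen.head_induction_on with
  | refl => exact .refl
  | head hac hcb ih => exact .head (h _ _ hac hv (hac.val.1 hv)) (ih (hac.val.1 hv))

theorem rtg_lift' {Δ Γ κ Δ' Γ' κ'} {F : Tm → Tm}
    (h : ∀ a b, C bu bv σ0 Δ Γ a b κ → C bu bv σ0 Δ' Γ' (F a) (F b) κ')
    {a b : Tm} (hch : Relation.ReflTransGen (fun a b => C bu bv σ0 Δ Γ a b κ) a b) :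
    Relation.ReflTransGen (fun a b => C bu bv σ0 Δ' Γ' a b κ') (F a) (F b) :=
  Relation.ReflTransGen.lift F h _ _ hch

section
variable (hσ : Ty.Wf 1 σ0) (hbu : HasTy 1 [] bu σ0) (hbv : HasTy 1 [] bv σ0)

theorem RC.wt : WellTypedRel (RC bu bv σ0) := fun _ _ _ _ _ h => ⟨h.1, h.2.1⟩

theorem RC.refl : ReflRel (RC bu bv σ0) := fun _ _ _ _ h => ⟨h, h, .refl⟩

theorem RC.trans : TransRel (RC bu bv σ0) :=
  fun _ _ _ _ _ _ h1 h2 => ⟨h1.1, h2.2.1, h1.2.2.trans h2.2.2⟩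

include hσ hbu hbv in
theorem RC.compatible : Compatible (RC bu bv σ0) := by
  constructor
  case var =>
    intro Δ Γ x τ hwf hx
    exact ⟨.var hwf hx, .var hwf hx, .refl⟩
  case unit =>
    intro Δ Γ hwf
    exact ⟨.unit hwf, .unit hwf, .refl⟩
  case pair =>
    intro Δ Γ v₁ v₂ v₁' v₂' τ₁ τ₂ h1 h2 h1' h2' hR1 hR2
    refine ⟨.pair h1 h2 hR1.1 hR2.1, .pair h1' h2' hR1.2.1 hR2.2.1, ?_⟩
    have chA := rtg_lift_val (F := fun t => Tm.pair t v₂)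
      (fun a b hab ha hb => C.pair ha h2 hb h2 hab (C.refl hR2.1)) hR1.2.2 h1
    have chB := rtg_lift_val (F := fun t => Tm.pair v₁' t)
      (fun a b hab ha hb => C.pair h1' ha h1' hb (C.refl hR1.2.1) hab) hR2.2.2 h2
    exact chA.trans chB
  case lam =>
    intro Δ Γ e e' τ₁ τ₂ hwτ hR
    exact ⟨.lam hwτ hR.1, .lam hwτ hR.2.1,
      rtg_lift' (F := Tm.lam) (fun a b hab => C.lam hwτ hab) hR.2.2⟩
  case inj =>
    intro Δ Γ v v' m ts j hj h1 h1' hwf hR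
    exact ⟨.inj hj h1 hwf hR.1, .inj hj h1' hwf hR.2.1,
      rtg_lift_val (F := Tm.inj j) (fun a b hab ha hb => C.inj hj ha hb hwf hab) hR.2.2 h1⟩
  case tlam =>
    intro Δ Γ e e' τ hR
    exact ⟨.tlam hR.1, .tlam hR.2.1,
      rtg_lift' (F := Tm.tlam) (fun a b hab => C.tlam hab) hR.2.2⟩
  case proj =>
    intro Δ Γ v v' τ₁ τ₂ b h1 h1' hR
    exact ⟨.proj b h1 hR.1, .proj b h1' hR.2.1,
      rtg_lift_val (F := Tm.proj b) (fun a a' hab ha ha' => C.proj b ha ha' hab) hR.2.2 h1⟩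
  case app =>
    intro Δ Γ v v' e e' τ₁ τ₂ h1 h1' hRv hRe
    refine ⟨.app h1 hRv.1 hRe.1, .app h1' hRv.2.1 hRe.2.1, ?_⟩
    have chA := rtg_lift' (F := fun t => Tm.app v t)
      (fun a b hab => C.app h1 h1 (C.refl hRv.1) hab) hRe.2.2
    have chB := rtg_lift_val (F := fun t => Tm.app t e')
      (fun a b hab ha hb => C.app ha hb hab (C.refl hRe.2.1)) hRv.2.2 h1
    exact chA.trans chB
  case case =>
    intro Δ Γ v v' τ' m ts es es' h1 h1' hRv hRbr
    refine ⟨.case h1 hRv.1 (fun j => (hRbr j).1), .case h1' hRv.2.1 (fun j => (hRbr j).2.1), ?_⟩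
    have chA := rtg_lift_val (F := fun t => Tm.case t m es)
      (fun a b hab ha hb => C.case ha hb hab (fun j => C.refl (hRbr j).1)) hRv.2.2 h1
    refine chA.trans ?_
    -- replace the branches one at a time
    have key : ∀ i : ℕ, i ≤ m →
        Relation.ReflTransGen (fun a b => C bu bv σ0 Δ Γ a b τ')
          (.case v' m es) (.case v' m (fun j => if j.1 < i then es' j else es j)) := by
      intro i
      induction i with
      | zero =>
          intro _
          have : (fun j : Fin m => if j.1 < 0 then es' j else es j) = es := by
            funext j; simp
          rw [this]
      | succ i ihi =>
          intro hi1
          have hi : i < m := hi1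
          refine (ihi (Nat.le_of_lt hi)).trans ?_
          have hlift := rtg_lift' (κ' := τ')
            (F := fun t => Tm.case v' m
              (fun j => if j.1 = i then t else (if j.1 < i then es' j else es j)))
            (fun a b hab => by
              refine C.case h1' h1' (C.refl hRv.2.1) (fun j => ?_)
              by_cases hji : j.1 = i
              · have hj : j = ⟨i, hi⟩ := Fin.ext hji
                subst hj
                simpa using hab
              · simp only [if_neg hji]
                by_cases hlt : j.1 < i
                · simp only [if_pos hlt]
                  exact C.refl (hRbr j).2.1
                · simp only [if_neg hlt]
                  exact C.refl (hRbr j).1)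
            (hRbr ⟨i, hi⟩).2.2
          have e1 : (fun j : Fin m => if j.1 = i then es ⟨i, hi⟩
              else (if j.1 < i then es' j else es j)) = (fun j => if j.1 < i then es' j else es j) := by
            funext j
            by_cases hji : j.1 = i
            · have hj : j = ⟨i, hi⟩ := Fin.ext hji
              subst hj
              simp
            · simp [hji]
          have e2 : (fun j : Fin m => if j.1 = i then es' ⟨i, hi⟩
              else (if j.1 < i then es' j else es j)) = (fun j => if j.1 < i + 1 then es' j else es j) := by
            funext j
            by_cases hji : j.1 = i
            · have hj : j = ⟨i, hi⟩ := Fin.ext hji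
              subst hj
              simp
            · have : j.1 < i + 1 ↔ j.1 < i := by omega
              simp [hji, this]
          have hlift2 : Relation.ReflTransGen (fun a b => C bu bv σ0 Δ Γ a b τ')
              (.case v' m (fun j : Fin m => if j.1 = i then es ⟨i, hi⟩
                else (if j.1 < i then es' j else es j)))
              (.case v' m (fun j : Fin m => if j.1 = i then es' ⟨i, hi⟩
                else (if j.1 < i then es' j else es j))) := hlift
          rw [e1, e2] at hlift2
          exact hlift2
    have := key m (Nat.le_refl m)
    have hm : (fun j : Fin m => if j.1 < m then es' j else es j) = es' := by
      funext j; simp [j.2]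
    rwa [hm] at this
  case tapp =>
    intro Δ Γ v v' τ σ h1 h1' hR hwσ
    exact ⟨.tapp h1 hR.1 hwσ, .tapp h1' hR.2.1 hwσ,
      rtg_lift_val (F := fun t => Tm.tapp t σ)
        (fun a b hab ha hb => C.tapp ha hb hab hwσ) hR.2.2 h1⟩
  case choice =>
    intro Δ Γ hwf
    exact ⟨.choice hwf, .choice hwf, .refl⟩

variable (hext : ∀ τ, Ty.Wf 0 τ →
  CtxMayEq 0 [] (letTapp (.tlam bu) τ) (letTapp (.tlam bv) τ) (Ty.subst1 τ σ0))

include hσ hbu hbv hext in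
theorem chain_adequate {τ : Ty} {a b : Tm}
    (hch : Relation.ReflTransGen (fun a b => C bu bv σ0 0 [] a b τ) a b) :
    MayConv a → MayConv b := by
  induction hch using Relation.ReflTransGen.head_induction_on with
  | refl => exact id
  | head hac _ ih =>
      intro hconv
      rcases mayConv_iff_redN.1 hconv with ⟨k, w, hred, hw⟩
      exact ih (C.adequate hσ hbu hbv hext k _ _ w τ hac hred hw)

include hσ hbu hbv hext in
theorem RC.mayAdequate : MayAdequate (RC bu bv σ0) := by
  rintro e e' τ ⟨-, -, hch⟩ hconv
  exact chain_adequate hσ hbu hbv hext hch hconv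

end

theorem canonical_all {w : Tm} {σ : Ty} (hw : IsVal w) (ht : HasTy 0 [] w (.all σ)) :
    ∃ b, w = .tlam b ∧ HasTy 1 [] b σ := by
  cases hw with
  | var => cases ht with | var _ hx => simp at hx
  | unit => cases ht
  | pair _ _ => cases ht
  | lam => cases ht
  | inj _ => cases ht
  | tlam => cases ht with | tlam h => exact ⟨_, rfl, by simpa using h⟩


end CountChoice

namespace CountChoice

/-- **Extensionality for ∀-types (may)** (Lemma 4.14): if `u` and `v` are
closed values of type `∀α.σ` such that `u τ ≅↓ctx v τ : σ[τ/α]` for every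
closed type `τ` (where `w τ` abbreviates `let f = w in f τ`), then
`u ≅↓ctx v : ∀α.σ`. -/
theorem forall_extensionality_may (σ : Ty) (hσ : Ty.Wf 1 σ)
    (u v : Tm) (hu : IsVal u) (hv : IsVal v)
    (huT : HasTy 0 [] u (.all σ)) (hvT : HasTy 0 [] v (.all σ))
    (h : ∀ τ, Ty.Wf 0 τ →
      CtxMayEq 0 [] (letTapp u τ) (letTapp v τ) (Ty.subst1 τ σ)) :
    CtxMayEq 0 [] u v (.all σ) := by
  rcases canonical_all hu huT with ⟨bu, rfl, hbu⟩
  rcases canonical_all hv hvT with ⟨bv, rfl, hbv⟩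
  refine ⟨⟨RC bu bv σ, RC.wt, RC.refl, RC.trans, RC.compatible hσ hbu hbv,
      RC.mayAdequate hσ hbu hbv h, huT, hvT, .single (.baseUV CtxWf.nil)⟩,
    ⟨RC bu bv σ, RC.wt, RC.refl, RC.trans, RC.compatible hσ hbu hbv,
      RC.mayAdequate hσ hbu hbv h, hvT, huT, .single (.baseVU CtxWf.nil)⟩⟩

end CountChoice
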